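/- arXiv:0809.3767 — 8 statements merged into one kernel-verified Lean document; each statement's English description precedes it below -/
import Mathlib

section
/- Assume R₀ > 1 and let n̂ be the stationary age profile. Then: (i) N̂ := ∫₀^∞ n̂(a) da = λ₁ / η; (ii) for every a ≥ 0, n̂ is differentiable at a with n̂′(a) = −(d(a) + η N̂) n̂(a); and (iii) n̂(0) = ∫₀^∞ b(a) n̂(a) da. In particular, n̂ is a nontrivial stationary solution of the Gurtin–McCamy equation with logistic death rate d(a) + η N. -/
open MeasureTheory Set

/-- Probability of survival from age `a₁` to age `a₂` in the absence of competition. -/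
noncomputable def survival (d : ℝ → ℝ) (a₁ a₂ : ℝ) : ℝ :=
  Real.exp (-(∫ α in a₁..a₂, d α))

/-- The Euler–Lotka characteristic function `φ(λ) = ∫₀^∞ e^{-λ a} b(a) Π(0,a) da`. -/
noncomputable def eulerLotka (b d : ℝ → ℝ) (lam : ℝ) : ℝ :=
  ∫ a in Ioi (0 : ℝ), Real.exp (-lam * a) * b a * survival d 0 a

/-- The stationary age profile
`n̂(a) = λ₁ e^{-λ₁ a} Π(0,a) / (η ∫₀^∞ e^{-λ₁ α} Π(0,α) dα)`. -/
noncomputable def statProfile (d : ℝ → ℝ) (η lam : ℝ) (a : ℝ) : ℝ :=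
  lam * Real.exp (-lam * a) * survival d 0 a /
    (η * ∫ α in Ioi (0 : ℝ), Real.exp (-lam * α) * survival d 0 α)

lemma survival_cont (d : ℝ → ℝ) (hdcont : Continuous d) :
    Continuous (fun a => survival d 0 a) := by
  apply Real.continuous_exp.comp
  apply Continuous.neg
  exact intervalIntegral.continuous_primitive (fun a b => hdcont.intervalIntegrable a b) 0

lemma survival_le_one (d : ℝ → ℝ) (hd0 : ∀ a, 0 ≤ a → 0 ≤ d a) {a : ℝ} (ha : 0 ≤ a) :
    survival d 0 a ≤ 1 := by
  rw [survival, ← Real.exp_zero]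
  apply Real.exp_le_exp.2
  simp only [neg_nonpos, Real.exp_zero]
  exact intervalIntegral.integral_nonneg ha (fun x hx => hd0 x hx.1)

set_option maxHeartbeats 1000000 in
/-- If `R₀ > 1` and `λ₁ > 0` is the root of the Euler–Lotka equation, then the
stationary profile `n̂` has total mass `N̂ = λ₁/η`, satisfies
`n̂′(a) = -(d(a) + η N̂) n̂(a)` for all `a ≥ 0`, and the birth boundary condition
`n̂(0) = ∫₀^∞ b(a) n̂(a) da`: it is a nontrivial stationary solution of the
Gurtin–McCamy equation with logistic death rate. -/
theorem statProfile_is_stationary_solution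
    (b d : ℝ → ℝ) (bbar dlow η lam : ℝ)
    (hbcont : Continuous b) (hb0 : ∀ a, 0 ≤ b a) (hbbar : ∀ a, b a ≤ bbar)
    (hbbarpos : 0 < bbar)
    (hdcont : Continuous d) (hdlow : ∀ a, 0 ≤ a → dlow ≤ d a) (hdlowpos : 0 < dlow)
    (hη : 0 < η)
    (hR0 : 1 < ∫ a in Ioi (0 : ℝ), b a * survival d 0 a)
    (hlam : 0 < lam) (hroot : eulerLotka b d lam = 1) :
    (∫ a in Ioi (0 : ℝ), statProfile d η lam a) = lam / η ∧
    (∀ a, 0 ≤ a →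
      HasDerivAt (statProfile d η lam)
        (-(d a + η * ∫ α in Ioi (0 : ℝ), statProfile d η lam α) * statProfile d η lam a) a) ∧
    statProfile d η lam 0 = ∫ a in Ioi (0 : ℝ), b a * statProfile d η lam a := by
  have hd0 : ∀ a, 0 ≤ a → 0 ≤ d a := fun a ha => hdlowpos.le.trans (hdlow a ha)
  obtain ⟨I, hIdef⟩ : ∃ I : ℝ, I = ∫ α in Ioi (0 : ℝ), Real.exp (-lam * α) * survival d 0 α :=
    ⟨_, rfl⟩
  -- integrability of the integrand of I
  have hg_cont : Continuous (fun α => Real.exp (-lam * α) * survival d 0 α) :=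
    ((Real.continuous_exp.comp (continuous_const.mul continuous_id)).mul
      (survival_cont d hdcont))
  have hg_int : IntegrableOn (fun α => Real.exp (-lam * α) * survival d 0 α) (Ioi 0) := by
    apply Integrable.mono (exp_neg_integrableOn_Ioi 0 hlam)
      hg_cont.aestronglyMeasurable.restrict
    filter_upwards [ae_restrict_mem measurableSet_Ioi] with x hx
    have hx0 : (0:ℝ) ≤ x := (le_of_lt hx)
    have hs : (0:ℝ) ≤ survival d 0 x := (Real.exp_pos _).le
    rw [Real.norm_eq_abs, Real.norm_eq_abs,
      abs_of_nonneg (mul_nonneg (Real.exp_pos _).le hs),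
      abs_of_nonneg (Real.exp_pos _).le]
    exact mul_le_of_le_one_right (Real.exp_pos _).le (survival_le_one d hd0 hx0)
  have hIpos : 0 < I := by
    rw [hIdef, setIntegral_pos_iff_support_of_nonneg_ae ?_ hg_int]
    · have : Function.support (fun α => Real.exp (-lam * α) * survival d 0 α) = univ := by
        ext x
        simp [Function.mem_support, (Real.exp_pos _).ne', survival, (Real.exp_pos _).ne']
      rw [this, univ_inter]
      simp [Real.volume_Ioi]
    · filter_upwards with x
      exact mul_nonneg (Real.exp_pos _).le (Real.exp_pos _).le
  have hD : η * I ≠ 0 := mul_ne_zero hη.ne' hIpos.ne'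
  -- part (i)
  have hmass : (∫ a in Ioi (0 : ℝ), statProfile d η lam a) = lam / η := by
    have hpt : ∀ a, statProfile d η lam a
        = (lam / (η * I)) * (Real.exp (-lam * a) * survival d 0 a) := by
      intro a
      simp only [statProfile]
      rw [← hIdef]
      ring
    simp_rw [hpt]
    rw [integral_const_mul, ← hIdef]
    field_simp
  refine ⟨hmass, ?_, ?_⟩
  · -- part (ii)
    intro a _
    rw [hmass]
    have hηl : η * (lam / η) = lam := by field_simp
    rw [hηl]
    -- build the derivative
    have hF : HasDerivAt (fun x => ∫ α in (0:ℝ)..x, d α) (d a) a :=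
      intervalIntegral.integral_hasDerivAt_right (hdcont.intervalIntegrable _ _)
        (hdcont.stronglyMeasurableAtFilter _ _) hdcont.continuousAt
    have hE : HasDerivAt (fun x => Real.exp (-lam * x)) (-lam * Real.exp (-lam * a)) a := by
      have h1 : HasDerivAt (fun x : ℝ => -lam * x) (-lam) a := by
        simpa using (hasDerivAt_id a).const_mul (-lam)
      simpa [mul_comm] using h1.exp
    have hP : HasDerivAt (fun x => Real.exp (-(∫ α in (0:ℝ)..x, d α)))
        (-(d a) * Real.exp (-(∫ α in (0:ℝ)..a, d α))) a := by
      simpa [mul_comm] using hF.neg.exp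
    have H := (((hE.const_mul lam).mul hP).div_const
      (η * ∫ α in Ioi (0 : ℝ), Real.exp (-lam * α) * survival d 0 α))
    have hval : (lam * (-lam * Real.exp (-lam * a)) * Real.exp (-(∫ α in (0:ℝ)..a, d α)) +
          lam * Real.exp (-lam * a) * (-(d a) * Real.exp (-(∫ α in (0:ℝ)..a, d α)))) /
          (η * ∫ α in Ioi (0 : ℝ), Real.exp (-lam * α) * survival d 0 α)
        = -(d a + lam) * statProfile d η lam a := by
      simp only [statProfile, survival]
      ring
    rw [hval] at H
    exact H
  · -- part (iii)
    have h0 : statProfile d η lam 0 = lam / (η * I) := by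
      simp only [statProfile]
      rw [← hIdef]
      simp [survival, intervalIntegral.integral_same]
    have hpt : ∀ a, b a * statProfile d η lam a
        = (lam / (η * I)) * (Real.exp (-lam * a) * b a * survival d 0 a) := by
      intro a
      simp only [statProfile]
      rw [← hIdef]
      ring
    rw [h0]
    simp_rw [hpt]
    rw [integral_const_mul]
    have : (∫ a in Ioi (0:ℝ), Real.exp (-lam * a) * b a * survival d 0 a) = 1 := hroot
    rw [this, mul_one]
end

section
/- Assume R₀ > 1. If m : [0, ∞) → [0, ∞) is differentiable, integrable, not identically zero, and satisfies m′(a) = −(d(a) + η ∫₀^∞ m(α) dα) · m(a) for all a ≥ 0 together with the boundary condition m(0) = ∫₀^∞ b(a) m(a) da, then m coincides with the stationary age profile n̂. Hence the nontrivial stationary solution of the logistic Gurtin–McCamy equation is unique. -/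
open MeasureTheory Set

lemma survival_continuous (d : ℝ → ℝ) (hd : Continuous d) :
    Continuous (fun a => survival d 0 a) := by
  have hprim : ∀ a : ℝ, HasDerivAt (fun u => ∫ t in (0:ℝ)..u, d t) (d a) a := fun a =>
    intervalIntegral.integral_hasDerivAt_right (hd.intervalIntegrable 0 a)
      hd.stronglyMeasurable.stronglyMeasurableAtFilter hd.continuousAt
  have h1 : Continuous (fun u => ∫ t in (0:ℝ)..u, d t) :=
    continuous_iff_continuousAt.mpr fun a => (hprim a).continuousAt
  exact Real.continuous_exp.comp h1.neg

lemma survival_le (d : ℝ → ℝ) (dlow : ℝ) (hdcont : Continuous d)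
    (hdlow : ∀ a, 0 ≤ a → dlow ≤ d a) {a : ℝ} (ha : 0 ≤ a) :
    survival d 0 a ≤ Real.exp (-dlow * a) := by
  have h1 : dlow * a ≤ ∫ t in (0:ℝ)..a, d t := by
    have := intervalIntegral.integral_mono_on (μ := volume) (f := fun _ => dlow) (g := d) ha
      (intervalIntegrable_const) (hdcont.intervalIntegrable 0 a) (fun x hx => hdlow x hx.1)
    simpa [mul_comm] using this
  have := Real.exp_le_exp.mpr (neg_le_neg h1)
  simpa [survival, neg_mul] using this

lemma integrable_aux (b d : ℝ → ℝ) (bbar dlow : ℝ) (hbcont : Continuous b)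
    (hb0 : ∀ a, 0 ≤ b a) (hbbar : ∀ a, b a ≤ bbar) (hbbarpos : 0 < bbar)
    (hdcont : Continuous d) (hdlow : ∀ a, 0 ≤ a → dlow ≤ d a) (hdlowpos : 0 < dlow)
    (c : ℝ) (hc : 0 ≤ c) :
    IntegrableOn (fun a => Real.exp (-c * a) * b a * survival d 0 a) (Ioi (0:ℝ)) := by
  apply Integrable.mono' ((exp_neg_integrableOn_Ioi 0 hdlowpos).const_mul bbar)
  · exact (((Real.continuous_exp.comp (continuous_const.mul continuous_id)).mul hbcont).mul
      (survival_continuous d hdcont)).aestronglyMeasurable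
  · filter_upwards [ae_restrict_mem measurableSet_Ioi] with a (ha : (0:ℝ) < a)
    have hPi : survival d 0 a ≤ Real.exp (-dlow * a) := survival_le d dlow hdcont hdlow ha.le
    have hPipos : 0 < survival d 0 a := Real.exp_pos _
    have hecle : Real.exp (-c * a) ≤ 1 := Real.exp_le_one_iff.mpr (by nlinarith)
    rw [Real.norm_eq_abs, abs_of_nonneg
      (mul_nonneg (mul_nonneg (Real.exp_pos _).le (hb0 a)) hPipos.le)]
    calc Real.exp (-c * a) * b a * survival d 0 a
        ≤ 1 * bbar * Real.exp (-dlow * a) := by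
          apply mul_le_mul (mul_le_mul hecle (hbbar a) (hb0 a) zero_le_one) hPi hPipos.le
          positivity
      _ = bbar * Real.exp (-dlow * a) := by ring

/-- strict decreasingness of the Euler–Lotka function, phrased as: it cannot take the
value 1 at two distinct nonnegative arguments. -/
lemma phi_inj_aux (b d : ℝ → ℝ) (bbar dlow : ℝ) (hbcont : Continuous b)
    (hb0 : ∀ a, 0 ≤ b a) (hbbar : ∀ a, b a ≤ bbar) (hbbarpos : 0 < bbar)
    (hdcont : Continuous d) (hdlow : ∀ a, 0 ≤ a → dlow ≤ d a) (hdlowpos : 0 < dlow)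
    (p q : ℝ) (hp0 : 0 ≤ p) (hpq : p < q)
    (hPhip : (∫ a in Ioi (0:ℝ), Real.exp (-p * a) * b a * survival d 0 a) = 1)
    (hPhiq : (∫ a in Ioi (0:ℝ), Real.exp (-q * a) * b a * survival d 0 a) = 1) : False := by
  have hq0 : 0 ≤ q := hp0.trans hpq.le
  have hip := integrable_aux b d bbar dlow hbcont hb0 hbbar hbbarpos hdcont hdlow hdlowpos p hp0
  have hiq := integrable_aux b d bbar dlow hbcont hb0 hbbar hbbarpos hdcont hdlow hdlowpos q hq0
  have hsub : (∫ a in Ioi (0:ℝ),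
      (Real.exp (-p * a) * b a * survival d 0 a - Real.exp (-q * a) * b a * survival d 0 a)) = 0 := by
    rw [integral_sub hip hiq, hPhip, hPhiq, sub_self]
  have hnn : (0:ℝ → ℝ) ≤ᵐ[volume.restrict (Ioi (0:ℝ))] fun a =>
      Real.exp (-p * a) * b a * survival d 0 a - Real.exp (-q * a) * b a * survival d 0 a := by
    filter_upwards [ae_restrict_mem measurableSet_Ioi] with a (ha : (0:ℝ) < a)
    have hle : Real.exp (-q * a) ≤ Real.exp (-p * a) := Real.exp_le_exp.mpr (by nlinarith)
    simp only [Pi.zero_apply]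
    have h1 : Real.exp (-q * a) * (b a * survival d 0 a) ≤
        Real.exp (-p * a) * (b a * survival d 0 a) :=
      mul_le_mul_of_nonneg_right hle (mul_nonneg (hb0 a) (Real.exp_pos _).le)
    nlinarith [h1]
  have hzero := (setIntegral_eq_zero_iff_of_nonneg_ae hnn (hip.sub hiq)).mp hsub
  have hbzero : ∀ᵐ a ∂(volume.restrict (Ioi (0:ℝ))),
      Real.exp (-p * a) * b a * survival d 0 a = 0 := by
    filter_upwards [hzero, ae_restrict_mem measurableSet_Ioi] with a h0 (ha : (0:ℝ) < a)
    simp only [Pi.zero_apply] at h0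
    have hlt : Real.exp (-q * a) < Real.exp (-p * a) := Real.exp_lt_exp.mpr (by nlinarith)
    have hfac : (Real.exp (-p * a) - Real.exp (-q * a)) * (b a * survival d 0 a) = 0 := by
      linear_combination h0
    have hbs : b a * survival d 0 a = 0 := by
      rcases mul_eq_zero.mp hfac with h | h
      · exact absurd h (by linarith)
      · exact h
    calc Real.exp (-p * a) * b a * survival d 0 a
        = Real.exp (-p * a) * (b a * survival d 0 a) := by ring
      _ = 0 := by rw [hbs, mul_zero]
  have : (∫ a in Ioi (0:ℝ), Real.exp (-p * a) * b a * survival d 0 a) = 0 :=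
    integral_eq_zero_of_ae hbzero
  rw [hPhip] at this
  exact one_ne_zero this

/-- Assume `R₀ > 1`. Any nonnegative, differentiable, integrable, not identically zero
function `m` on `[0,∞)` satisfying the stationary logistic Gurtin–McCamy equation
`m′(a) = -(d(a) + η ∫₀^∞ m) m(a)` with boundary condition `m(0) = ∫₀^∞ b(a) m(a) da`
coincides with the stationary profile `n̂`: the nontrivial stationary solution is unique. -/
theorem stationary_solution_unique
    (b d : ℝ → ℝ) (bbar dlow η lam : ℝ)
    (hbcont : Continuous b) (hb0 : ∀ a, 0 ≤ b a) (hbbar : ∀ a, b a ≤ bbar)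
    (hbbarpos : 0 < bbar)
    (hdcont : Continuous d) (hdlow : ∀ a, 0 ≤ a → dlow ≤ d a) (hdlowpos : 0 < dlow)
    (hη : 0 < η)
    (hR0 : 1 < ∫ a in Ioi (0 : ℝ), b a * survival d 0 a)
    (hlam : 0 < lam) (hroot : eulerLotka b d lam = 1)
    (m : ℝ → ℝ)
    (hm0 : ∀ a, 0 ≤ a → 0 ≤ m a)
    (hmint : IntegrableOn m (Ioi (0 : ℝ)))
    (hmderiv : ∀ a, 0 ≤ a →
      HasDerivAt m (-(d a + η * ∫ α in Ioi (0 : ℝ), m α) * m a) a)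
    (hmne : ∃ a, 0 ≤ a ∧ m a ≠ 0)
    (hmbc : m 0 = ∫ a in Ioi (0 : ℝ), b a * m a) :
    ∀ a, 0 ≤ a → m a = statProfile d η lam a := by
  set c : ℝ := η * ∫ α in Ioi (0:ℝ), m α with hc_def
  have hintm_nonneg : 0 ≤ ∫ α in Ioi (0:ℝ), m α :=
    setIntegral_nonneg measurableSet_Ioi (fun a ha => hm0 a (le_of_lt ha))
  have hcnn : (0:ℝ) ≤ c := mul_nonneg hη.le hintm_nonneg
  have hprim : ∀ x : ℝ, HasDerivAt (fun u => ∫ t in (0:ℝ)..u, d t) (d x) x := fun x =>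
    intervalIntegral.integral_hasDerivAt_right (hdcont.intervalIntegrable 0 x)
      hdcont.stronglyMeasurable.stronglyMeasurableAtFilter hdcont.continuousAt
  -- solution formula
  have hsol : ∀ a, 0 ≤ a → m a = m 0 * (Real.exp (-c * a) * survival d 0 a) := by
    intro a ha
    set F : ℝ → ℝ := fun u => ∫ t in (0:ℝ)..u, d t with hF
    set G : ℝ → ℝ := fun u => m u * Real.exp (F u + c * u) with hG
    have hGderiv : ∀ x, 0 ≤ x → HasDerivAt G 0 x := by
      intro x hx
      have h1 : HasDerivAt (fun u => F u + c * u) (d x + c) x := by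
        have h2 : HasDerivAt (fun u : ℝ => c * u) c x := by
          simpa using (hasDerivAt_id x).const_mul c
        exact (hprim x).add h2
      have h3 : HasDerivAt (fun u => m u * Real.exp (F u + c * u)) _ x :=
        (hmderiv x hx).mul h1.exp
      convert h3 using 1
      ring
    have hGconst := constant_of_has_deriv_right_zero (f := G) (a := 0) (b := a)
      (fun x hx => ((hGderiv x hx.1).continuousAt.continuousWithinAt))
      (fun x hx => (hGderiv x hx.1).hasDerivWithinAt)
    have hGa : G a = G 0 := hGconst a (right_mem_Icc.mpr ha)
    have hG0 : G 0 = m 0 := by simp [hG, hF]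
    have hGa' : m a * Real.exp (F a + c * a) = m 0 := by rw [← hG0, ← hGa]
    have hma : m a = m 0 * Real.exp (-(F a + c * a)) := by
      rw [Real.exp_neg, ← hGa', mul_assoc, mul_inv_cancel₀ (Real.exp_ne_zero _), mul_one]
    rw [hma]
    have : survival d 0 a = Real.exp (-(F a)) := rfl
    rw [this, ← Real.exp_add]
    congr 1
    ring
  -- m 0 ≠ 0
  obtain ⟨a₀, ha₀, hma₀⟩ := hmne
  have hm0ne : m 0 ≠ 0 := by
    intro h; exact hma₀ (by rw [hsol a₀ ha₀, h, zero_mul])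
  have hm0pos : 0 < m 0 := lt_of_le_of_ne (hm0 0 le_rfl) (Ne.symm hm0ne)
  -- boundary condition gives Φ(c) = 1
  have hbc2 : (∫ a in Ioi (0:ℝ), b a * m a)
      = m 0 * ∫ a in Ioi (0:ℝ), Real.exp (-c * a) * b a * survival d 0 a := by
    rw [← integral_const_mul]
    apply setIntegral_congr_fun measurableSet_Ioi
    intro a ha
    simp only
    rw [hsol a (le_of_lt ha)]
    ring
  have hPhic : (∫ a in Ioi (0:ℝ), Real.exp (-c * a) * b a * survival d 0 a) = 1 :=
    (mul_left_cancel₀ hm0ne (by rw [mul_one]; exact hmbc.trans hbc2)).symm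
  -- c = lam
  have hkey : c = lam := by
    rcases lt_trichotomy c lam with h | h | h
    · exact absurd (phi_inj_aux b d bbar dlow hbcont hb0 hbbar hbbarpos hdcont hdlow hdlowpos
        c lam hcnn h hPhic hroot) (fun f => f.elim)
    · exact h
    · exact absurd (phi_inj_aux b d bbar dlow hbcont hb0 hbbar hbbarpos hdcont hdlow hdlowpos
        lam c hlam.le h hroot hPhic) (fun f => f.elim)
  -- compute ∫ m
  set I : ℝ := ∫ α in Ioi (0:ℝ), Real.exp (-lam * α) * survival d 0 α with hI
  have hintm : (∫ α in Ioi (0:ℝ), m α) = m 0 * I := by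
    rw [hI, ← integral_const_mul]
    apply setIntegral_congr_fun measurableSet_Ioi
    intro α hα
    simp only
    rw [hsol α (le_of_lt hα), hkey]
  have hlameq : lam = η * (m 0 * I) := by rw [← hkey, hc_def, hintm]
  have hηI : η * I = lam / m 0 := by
    rw [hlameq]; field_simp
  intro a ha
  rw [hsol a ha, hkey, statProfile, ← hI, hηI]
  field_simp
end

section
/- Assume R₀ ≤ 1. If m : [0, ∞) → [0, ∞) is differentiable, integrable, satisfies m′(a) = −(d(a) + η ∫₀^∞ m(α) dα) · m(a) for all a ≥ 0 and m(0) = ∫₀^∞ b(a) m(a) da, then m is identically zero: when generations do not renew themselves in the absence of competition, the only stationary state of the logistic Gurtin–McCamy equation is the trivial one. -/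
open MeasureTheory Set

/-- If `R₀ = ∫₀^∞ b(a) Π(0,a) da ≤ 1`, then any nonnegative, differentiable, integrable
solution of the stationary logistic Gurtin–McCamy equation
`m′(a) = -(d(a) + η ∫₀^∞ m) m(a)`, `m(0) = ∫₀^∞ b(a) m(a) da`,
is identically zero on `[0,∞)`: the only stationary state is the trivial one. -/
theorem stationary_solution_trivial_of_R0_le_one
    (b d : ℝ → ℝ) (bbar dlow η : ℝ)
    (hbcont : Continuous b) (hb0 : ∀ a, 0 ≤ b a) (hbbar : ∀ a, b a ≤ bbar)
    (hbbarpos : 0 < bbar)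
    (hdcont : Continuous d) (hdlow : ∀ a, 0 ≤ a → dlow ≤ d a) (hdlowpos : 0 < dlow)
    (hη : 0 < η)
    (hR0 : (∫ a in Ioi (0 : ℝ), b a * survival d 0 a) ≤ 1)
    (m : ℝ → ℝ)
    (hm0 : ∀ a, 0 ≤ a → 0 ≤ m a)
    (hmint : IntegrableOn m (Ioi (0 : ℝ)))
    (hmderiv : ∀ a, 0 ≤ a →
      HasDerivAt m (-(d a + η * ∫ α in Ioi (0 : ℝ), m α) * m a) a)
    (hmbc : m 0 = ∫ a in Ioi (0 : ℝ), b a * m a) :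
    ∀ a, 0 ≤ a → m a = 0 := by
  set M : ℝ := ∫ α in Ioi (0 : ℝ), m α with hMdef
  have hMnn : 0 ≤ M :=
    setIntegral_nonneg measurableSet_Ioi (fun x hx => hm0 x (le_of_lt hx))
  set c : ℝ := η * M with hcdef
  have hcnn : 0 ≤ c := mul_nonneg hη.le hMnn
  set F : ℝ → ℝ := fun a => ∫ α in (0:ℝ)..a, d α with hFdef
  have hdc : Continuous fun α => d α + c := hdcont.add continuous_const
  set E : ℝ → ℝ := fun a => ∫ α in (0:ℝ)..a, (d α + c) with hEdef
  have hEderiv : ∀ a : ℝ, HasDerivAt E (d a + c) a := fun a =>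
    intervalIntegral.integral_hasDerivAt_right (hdc.intervalIntegrable 0 a)
      (hdc.stronglyMeasurableAtFilter _ _) hdc.continuousAt
  have hFderiv : ∀ a : ℝ, HasDerivAt F (d a) a := fun a =>
    intervalIntegral.integral_hasDerivAt_right (hdcont.intervalIntegrable 0 a)
      (hdcont.stronglyMeasurableAtFilter _ _) hdcont.continuousAt
  have hFcont : Continuous F := by
    rw [continuous_iff_continuousAt]; exact fun a => (hFderiv a).continuousAt
  have hEsplit : ∀ a : ℝ, E a = F a + c * a := by
    intro a
    have := intervalIntegral.integral_add (μ := volume)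
      (hdcont.intervalIntegrable 0 a) (intervalIntegrable_const (c := c))
    simp only [hEdef, hFdef, intervalIntegral.integral_const, smul_eq_mul] at this ⊢
    rw [this]; ring
  -- key representation of m
  have key : ∀ a, 0 ≤ a → m a = m 0 * Real.exp (-(E a)) := by
    intro a ha
    have hφ : ∀ x ∈ Icc (0:ℝ) a, m x * Real.exp (E x) = m 0 * Real.exp (E 0) := by
      apply constant_of_has_deriv_right_zero
      · intro x hx
        exact (((hmderiv x hx.1).continuousAt).mul
          ((Real.continuous_exp.continuousAt).comp (hEderiv x).continuousAt)).continuousWithinAt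
      · intro x hx
        have hd : HasDerivAt (fun y => m y * Real.exp (E y))
            ((-(d x + η * M) * m x) * Real.exp (E x) + m x * (Real.exp (E x) * (d x + c))) x :=
          (hmderiv x hx.1).mul ((hEderiv x).exp)
        have h0 : (-(d x + η * M) * m x) * Real.exp (E x)
            + m x * (Real.exp (E x) * (d x + c)) = 0 := by
          rw [hcdef]; ring
        rw [h0] at hd
        exact hd.hasDerivWithinAt
    have hE0 : E 0 = 0 := by simp [hEdef]
    have h := hφ a ⟨ha, le_rfl⟩
    rw [hE0, Real.exp_zero, mul_one] at h
    have hexp : Real.exp (E a) ≠ 0 := Real.exp_ne_zero _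
    field_simp [Real.exp_neg]
    rw [← h, mul_assoc, ← Real.exp_add, add_neg_cancel, Real.exp_zero, mul_one]
  -- dispose of the trivial case m 0 = 0
  rcases eq_or_lt_of_le (hm0 0 le_rfl) with hz | hm0pos
  · intro a ha; rw [key a ha, ← hz, zero_mul]
  exfalso
  -- m is strictly positive on [0,∞)
  have hmpos : ∀ a, 0 ≤ a → 0 < m a := by
    intro a ha
    rw [key a ha]
    exact mul_pos hm0pos (Real.exp_pos _)
  -- hence M > 0 and c > 0
  have hMpos : 0 < M := by
    rcases eq_or_lt_of_le hMnn with hMz | h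
    · exfalso
      have hnn : 0 ≤ᶠ[ae (volume.restrict (Ioi (0:ℝ)))] m := by
        filter_upwards [ae_restrict_mem measurableSet_Ioi] with x hx
        exact hm0 x hx.le
      have hae := (setIntegral_eq_zero_iff_of_nonneg_ae hnn hmint).mp hMz.symm
      have hae' := (ae_restrict_iff' measurableSet_Ioi).mp hae
      have hnull : volume {x : ℝ | ¬ (x ∈ Ioi (0:ℝ) → m x = 0)} = 0 := ae_iff.mp hae'
      have hsub : Ioi (0:ℝ) ⊆ {x : ℝ | ¬ (x ∈ Ioi (0:ℝ) → m x = 0)} := by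
        intro x hx
        simp only [mem_setOf_eq]
        intro himp
        exact absurd (himp hx) (ne_of_gt (hmpos x hx.le))
      have : volume (Ioi (0:ℝ)) = 0 :=
        le_antisymm (hnull ▸ measure_mono hsub) zero_le
      simp [Real.volume_Ioi] at this
    · exact h
  have hcpos : 0 < c := mul_pos hη hMpos
  set G : ℝ → ℝ := fun a => b a * Real.exp (-(F a)) with hGdef
  set g : ℝ → ℝ := fun a => G a * Real.exp (-(c * a)) with hgdef
  have hGcont : Continuous G := hbcont.mul (Real.continuous_exp.comp hFcont.neg)
  have hGnn : ∀ a, 0 ≤ G a := fun a => mul_nonneg (hb0 a) (Real.exp_pos _).le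
  have hgnn : ∀ a, 0 ≤ g a := fun a => mul_nonneg (hGnn a) (Real.exp_pos _).le
  have hgcont : Continuous g :=
    hGcont.mul (Real.continuous_exp.comp (continuous_const.mul continuous_id).neg)
  have hFlb : ∀ a, 0 ≤ a → dlow * a ≤ F a := by
    intro a ha
    have h1 : ∫ α in (0:ℝ)..a, dlow ≤ ∫ α in (0:ℝ)..a, d α :=
      intervalIntegral.integral_mono_on ha intervalIntegrable_const
        (hdcont.intervalIntegrable 0 a) (fun x hx => hdlow x hx.1)
    simpa [intervalIntegral.integral_const, smul_eq_mul, mul_comm] using h1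
  have hGbound : ∀ a ∈ Ioi (0:ℝ), ‖G a‖ ≤ bbar * Real.exp (-dlow * a) := by
    intro a ha
    rw [Real.norm_eq_abs, abs_of_nonneg (hGnn a)]
    have h2 : Real.exp (-(F a)) ≤ Real.exp (-dlow * a) :=
      Real.exp_le_exp.mpr (by nlinarith [hFlb a ha.le])
    exact mul_le_mul (hbbar a) h2 (Real.exp_pos _).le hbbarpos.le
  have hgbound : ∀ a ∈ Ioi (0:ℝ), ‖g a‖ ≤ bbar * Real.exp (-dlow * a) := by
    intro a ha
    rw [Real.norm_eq_abs, abs_of_nonneg (hgnn a)]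
    have h3 : Real.exp (-(c * a)) ≤ 1 :=
      Real.exp_le_one_iff.mpr (by nlinarith [mem_Ioi.mp ha, hcpos])
    calc g a ≤ G a * 1 := mul_le_mul_of_nonneg_left h3 (hGnn a)
    _ = G a := mul_one _
    _ ≤ bbar * Real.exp (-dlow * a) := by
        have := hGbound a ha
        rwa [Real.norm_eq_abs, abs_of_nonneg (hGnn a)] at this
  have hbig : IntegrableOn (fun a => bbar * Real.exp (-dlow * a)) (Ioi (0:ℝ)) :=
    (exp_neg_integrableOn_Ioi 0 hdlowpos).const_mul bbar
  have hGint : IntegrableOn G (Ioi (0:ℝ)) :=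
    hbig.mono' hGcont.aestronglyMeasurable.restrict
      ((ae_restrict_iff' measurableSet_Ioi).mpr (Filter.Eventually.of_forall hGbound))
  have hgint : IntegrableOn g (Ioi (0:ℝ)) :=
    hbig.mono' hgcont.aestronglyMeasurable.restrict
      ((ae_restrict_iff' measurableSet_Ioi).mpr (Filter.Eventually.of_forall hgbound))
  have hrw : EqOn (fun a => b a * m a) (fun a => m 0 * g a) (Ioi (0:ℝ)) := by
    intro a ha
    have hexp : Real.exp (-(F a + c * a)) = Real.exp (-(F a)) * Real.exp (-(c * a)) := by
      rw [← Real.exp_add]; ring_nf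
    simp only [hgdef, hGdef]
    rw [key a ha.le, hEsplit a, hexp]
    ring
  have hbc2 : (∫ a in Ioi (0:ℝ), b a * m a) = m 0 * ∫ a in Ioi (0:ℝ), g a := by
    rw [setIntegral_congr_fun measurableSet_Ioi hrw, integral_const_mul]
  have hbc3 : m 0 = m 0 * ∫ a in Ioi (0:ℝ), g a := hmbc.trans hbc2
  have hI1 : (∫ a in Ioi (0:ℝ), g a) = 1 := by
    rcases mul_right_eq_self₀.mp hbc3.symm with h | h
    · exact h
    · exact absurd h (ne_of_gt hm0pos)
  have hle : (∫ a in Ioi (0:ℝ), g a) ≤ ∫ a in Ioi (0:ℝ), G a := by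
    apply setIntegral_mono_on hgint hGint measurableSet_Ioi
    intro a ha
    have h3 : Real.exp (-(c * a)) ≤ 1 :=
      Real.exp_le_one_iff.mpr (by nlinarith [mem_Ioi.mp ha])
    calc g a ≤ G a * 1 := mul_le_mul_of_nonneg_left h3 (hGnn a)
    _ = G a := mul_one _
  have hGR : (∫ a in Ioi (0:ℝ), G a) ≤ 1 := by
    simpa [survival, hGdef, hFdef] using hR0
  have hGeq1 : (∫ a in Ioi (0:ℝ), G a) = 1 := le_antisymm hGR (hI1 ▸ hle)
  have hsubint : (∫ a in Ioi (0:ℝ), (G a - g a)) = 0 := by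
    rw [integral_sub hGint hgint, hGeq1, hI1]; ring
  have hnn2 : 0 ≤ᶠ[ae (volume.restrict (Ioi (0:ℝ)))] fun a => G a - g a := by
    rw [Filter.EventuallyLE, ae_restrict_iff' measurableSet_Ioi]
    apply Filter.Eventually.of_forall
    intro a ha
    have h3 : Real.exp (-(c * a)) ≤ 1 :=
      Real.exp_le_one_iff.mpr (by nlinarith [mem_Ioi.mp ha])
    simp only [Pi.zero_apply, sub_nonneg, hgdef]
    calc G a * Real.exp (-(c * a)) ≤ G a * 1 := mul_le_mul_of_nonneg_left h3 (hGnn a)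
    _ = G a := mul_one _
  have hae2 := (setIntegral_eq_zero_iff_of_nonneg_ae hnn2 (hGint.sub hgint)).mp hsubint
  have hae3 := (ae_restrict_iff' measurableSet_Ioi).mp hae2
  have hGae : ∀ᵐ a ∂(volume.restrict (Ioi (0:ℝ))), G a = 0 := by
    rw [ae_restrict_iff' measurableSet_Ioi]
    filter_upwards [hae3] with a h ha
    have h' : G a - g a = 0 := h ha
    have hlt : Real.exp (-(c * a)) < 1 :=
      Real.exp_lt_one_iff.mpr (by nlinarith [mem_Ioi.mp ha])
    have hfac : G a * (1 - Real.exp (-(c * a))) = 0 := by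
      simp only [hgdef] at h'; ring_nf; ring_nf at h'; linarith
    rcases mul_eq_zero.mp hfac with h0 | h0
    · exact h0
    · exact absurd h0 (by nlinarith)
  have hzero : (∫ a in Ioi (0:ℝ), G a) = 0 := integral_eq_zero_of_ae hGae
  rw [hGeq1] at hzero
  norm_num at hzero
end

section
/- For every t ≥ 0 the series B(t) = ∑_{n=0}^∞ c_n(t) converges, satisfies 0 ≤ B(t) ≤ b̄ e^{b̄ t}, and B solves the renewal equation B(t) = B₀(t) + ∫₀^t g(t − s) B(s) ds for all t ≥ 0. -/
open MeasureTheory Set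

/-- The renewal series `B(t) = ∑ₙ cₙ(t)` converges, satisfies `0 ≤ B(t) ≤ b̄ e^{b̄ t}`,
and solves the renewal equation `B(t) = B₀(t) + ∫₀^t g(t-s) B(s) ds`. -/
theorem renewal_series_solves_renewal_equation
    (bbar : ℝ) (hbbar : 0 < bbar)
    (B₀ g : ℝ → ℝ) (hB₀meas : Measurable B₀) (hgmeas : Measurable g)
    (hB₀ : ∀ t, 0 ≤ t → 0 ≤ B₀ t ∧ B₀ t ≤ bbar)
    (hg : ∀ t, 0 ≤ t → 0 ≤ g t ∧ g t ≤ bbar)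
    (c : ℕ → ℝ → ℝ)
    (hc0 : ∀ t, c 0 t = B₀ t)
    (hcrec : ∀ n t, c (n + 1) t = ∫ s in (0 : ℝ)..t, g (t - s) * c n s)
    (B : ℝ → ℝ) (hB : ∀ t, B t = ∑' n : ℕ, c n t) :
    ∀ t, 0 ≤ t →
      Summable (fun n : ℕ => c n t) ∧
      0 ≤ B t ∧ B t ≤ bbar * Real.exp (bbar * t) ∧
      B t = B₀ t + ∫ s in (0 : ℝ)..t, g (t - s) * B s := by
  -- the truncated iterates
  set c' : ℕ → ℝ → ℝ := fun n s => if 0 ≤ s then c n s else 0 with hc'def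
  have hc'eq : ∀ n s, 0 ≤ s → c' n s = c n s := fun n s hs => if_pos hs
  -- the main induction: measurability and bounds
  have main : ∀ n : ℕ, Measurable (c' n) ∧
      ∀ t, 0 ≤ t → 0 ≤ c n t ∧ c n t ≤ bbar ^ (n + 1) * t ^ n / n.factorial := by
    intro n
    induction n with
    | zero =>
      constructor
      · have h0 : c 0 = B₀ := funext hc0
        exact Measurable.ite measurableSet_Ici (h0 ▸ hB₀meas) measurable_const
      · intro t ht
        rw [hc0]
        simpa using hB₀ t ht
    | succ n ih =>
      obtain ⟨hm, hb⟩ := ih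
      -- rewrite of the recursion as a set integral over Ioc, with the truncated iterate
      have key : ∀ t : ℝ, 0 ≤ t →
          c (n + 1) t = ∫ s in Ioc (0 : ℝ) t, g (t - s) * c' n s := by
        intro t ht
        rw [hcrec, intervalIntegral.integral_of_le ht]
        refine setIntegral_congr_fun measurableSet_Ioc fun s hs => ?_
        rw [hc'eq n s (le_of_lt hs.1)]
      -- measurability of integrands
      have hmeas_int : ∀ t : ℝ, Measurable (fun s => g (t - s) * c' n s) := fun t =>
        (hgmeas.comp (measurable_const.sub measurable_id)).mul hm
      -- integrability of the integrand on `Ioc 0 t`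
      have hint : ∀ t : ℝ, 0 ≤ t → Integrable (fun s => g (t - s) * c' n s)
          (volume.restrict (Ioc (0 : ℝ) t)) := by
        intro t ht
        haveI : IsFiniteMeasure (volume.restrict (Ioc (0 : ℝ) t)) :=
          ⟨by rw [Measure.restrict_apply_univ]; exact measure_Ioc_lt_top⟩
        refine Integrable.mono' (integrable_const
          (bbar * (bbar ^ (n + 1) * t ^ n / n.factorial))) (hmeas_int t).aestronglyMeasurable ?_
        refine (ae_restrict_mem measurableSet_Ioc).mono fun s hs => ?_
        have hs0 : (0 : ℝ) ≤ s := le_of_lt hs.1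
        have hts : (0 : ℝ) ≤ t - s := sub_nonneg.2 hs.2
        have h1 := hg (t - s) hts
        have h2 := hb s hs0
        rw [hc'eq n s hs0]
        rw [Real.norm_eq_abs, abs_of_nonneg (mul_nonneg h1.1 h2.1)]
        have hsn : s ^ n ≤ t ^ n := pow_le_pow_left₀ hs0 hs.2 n
        have hfac : (0 : ℝ) < n.factorial := by positivity
        have : c n s ≤ bbar ^ (n + 1) * t ^ n / n.factorial := by
          refine h2.2.trans ?_
          gcongr
        exact mul_le_mul h1.2 this h2.1 (le_of_lt hbbar)
      constructor
      · -- measurability of `c' (n+1)`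
        have : c' (n + 1) = fun t => ∫ s,
            ({p : ℝ × ℝ | 0 < p.2 ∧ p.2 ≤ p.1}.indicator
              (fun p => g (p.1 - p.2) * c' n p.2)) (t, s) := by
          funext t
          by_cases ht : 0 ≤ t
          · rw [hc'eq (n + 1) t ht, key t ht, ← integral_indicator measurableSet_Ioc]
            refine integral_congr_ae (Filter.Eventually.of_forall fun s => ?_)
            simp only [Set.indicator_apply, mem_Ioc, mem_setOf_eq]
          · have hz : c' (n + 1) t = 0 := if_neg ht
            rw [hz]
            have hzero : ∀ s : ℝ, ({p : ℝ × ℝ | 0 < p.2 ∧ p.2 ≤ p.1}.indicator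
                (fun p => g (p.1 - p.2) * c' n p.2)) (t, s) = 0 := by
              intro s
              refine indicator_of_notMem ?_ _
              simp only [mem_setOf_eq, not_and]
              intro h1 h2
              exact ht (le_of_lt (lt_of_lt_of_le h1 h2))
            simp only [hzero, integral_zero]
        rw [this]
        have hS : MeasurableSet {p : ℝ × ℝ | 0 < p.2 ∧ p.2 ≤ p.1} :=
          (measurableSet_lt measurable_const measurable_snd).inter
            (measurableSet_le measurable_snd measurable_fst)
        have hF : Measurable fun p : ℝ × ℝ => g (p.1 - p.2) * c' n p.2 :=
          (hgmeas.comp (measurable_fst.sub measurable_snd)).mul (hm.comp measurable_snd)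
        exact (((hF.indicator hS).stronglyMeasurable).integral_prod_right').measurable
      · -- bounds for `c (n+1)`
        intro t ht
        rw [key t ht]
        constructor
        · refine setIntegral_nonneg measurableSet_Ioc fun s hs => ?_
          have hs0 : (0 : ℝ) ≤ s := le_of_lt hs.1
          rw [hc'eq n s hs0]
          exact mul_nonneg (hg _ (sub_nonneg.2 hs.2)).1 (hb s hs0).1
        · have hmono : ∫ s in Ioc (0 : ℝ) t, g (t - s) * c' n s ≤
              ∫ s in Ioc (0 : ℝ) t, bbar * (bbar ^ (n + 1) * s ^ n / n.factorial) := by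
            refine setIntegral_mono_on (hint t ht) ?_ measurableSet_Ioc fun s hs => ?_
            · exact Continuous.integrableOn_Ioc (by continuity)
            · have hs0 : (0 : ℝ) ≤ s := le_of_lt hs.1
              have h1 := hg (t - s) (sub_nonneg.2 hs.2)
              have h2 := hb s hs0
              rw [hc'eq n s hs0]
              exact mul_le_mul h1.2 h2.2 h2.1 (le_of_lt hbbar)
          refine hmono.trans ?_
          rw [← intervalIntegral.integral_of_le ht]
          have : ∫ s in (0 : ℝ)..t, bbar * (bbar ^ (n + 1) * s ^ n / n.factorial)
              = (bbar * (bbar ^ (n + 1) / n.factorial)) * (t ^ (n + 1) / (n + 1)) := by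
            have : (fun s : ℝ => bbar * (bbar ^ (n + 1) * s ^ n / n.factorial))
                = fun s : ℝ => (bbar * (bbar ^ (n + 1) / n.factorial)) * s ^ n := by
              funext s; ring
            rw [this, intervalIntegral.integral_const_mul, integral_pow]
            ring_nf
          rw [this]
          have hfac : (0 : ℝ) < n.factorial := by positivity
          have hfs : ((n + 1).factorial : ℝ) = (n + 1) * n.factorial := by
            rw [Nat.factorial_succ]; push_cast; ring
          refine le_of_eq ?_
          rw [hfs]
          have hfac' : (n.factorial : ℝ) ≠ 0 := hfac.ne'
          have hn1' : ((n : ℝ) + 1) ≠ 0 := by positivity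
          field_simp
          ring
  -- summability with the exponential bound
  have hboundexp : ∀ n : ℕ, ∀ t : ℝ, 0 ≤ t →
      c n t ≤ bbar * ((bbar * t) ^ n / n.factorial) := by
    intro n t ht
    refine ((main n).2 t ht).2.trans (le_of_eq ?_)
    rw [mul_pow, pow_succ]
    ring
  have hsummaux : ∀ t : ℝ, Summable (fun n : ℕ => bbar * ((bbar * t) ^ n / n.factorial)) :=
    fun t => (Real.summable_pow_div_factorial (bbar * t)).mul_left bbar
  have hsum : ∀ t : ℝ, 0 ≤ t → Summable (fun n : ℕ => c n t) := by
    intro t ht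
    exact Summable.of_nonneg_of_le (fun n => ((main n).2 t ht).1)
      (fun n => hboundexp n t ht) (hsummaux t)
  intro t ht
  refine ⟨hsum t ht, ?_, ?_, ?_⟩
  · rw [hB]
    exact tsum_nonneg fun n => ((main n).2 t ht).1
  · rw [hB]
    calc ∑' n : ℕ, c n t ≤ ∑' n : ℕ, bbar * ((bbar * t) ^ n / n.factorial) :=
          Summable.tsum_le_tsum (fun n => hboundexp n t ht) (hsum t ht) (hsummaux t)
      _ = bbar * ∑' n : ℕ, (bbar * t) ^ n / n.factorial := tsum_mul_left
      _ = bbar * Real.exp (bbar * t) := by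
          congr 1
          rw [Real.exp_eq_exp_ℝ, NormedSpace.exp_eq_tsum_div]
  · -- the renewal equation
    have key : ∀ n : ℕ, c (n + 1) t = ∫ s in Ioc (0 : ℝ) t, g (t - s) * c' n s := by
      intro n
      rw [hcrec, intervalIntegral.integral_of_le ht]
      refine setIntegral_congr_fun measurableSet_Ioc fun s hs => ?_
      rw [hc'eq n s (le_of_lt hs.1)]
    have hint : ∀ n : ℕ, Integrable (fun s => g (t - s) * c' n s)
        (volume.restrict (Ioc (0 : ℝ) t)) := by
      intro n
      haveI : IsFiniteMeasure (volume.restrict (Ioc (0 : ℝ) t)) :=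
        ⟨by rw [Measure.restrict_apply_univ]; exact measure_Ioc_lt_top⟩
      refine Integrable.mono' (integrable_const
        (bbar * (bbar ^ (n + 1) * t ^ n / n.factorial)))
        ((hgmeas.comp (measurable_const.sub measurable_id)).mul (main n).1).aestronglyMeasurable ?_
      refine (ae_restrict_mem measurableSet_Ioc).mono fun s hs => ?_
      have hs0 : (0 : ℝ) ≤ s := le_of_lt hs.1
      have h1 := hg (t - s) (sub_nonneg.2 hs.2)
      have h2 := (main n).2 s hs0
      rw [hc'eq n s hs0, Real.norm_eq_abs, abs_of_nonneg (mul_nonneg h1.1 h2.1)]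
      have hsn : s ^ n ≤ t ^ n := pow_le_pow_left₀ hs0 hs.2 n
      have hfac : (0 : ℝ) < n.factorial := by positivity
      have : c n s ≤ bbar ^ (n + 1) * t ^ n / n.factorial := by
        refine h2.2.trans ?_
        gcongr
      exact mul_le_mul h1.2 this h2.1 (le_of_lt hbbar)
    have hnormsum : Summable fun n : ℕ =>
        ∫ s in Ioc (0 : ℝ) t, ‖g (t - s) * c' n s‖ := by
      refine Summable.of_nonneg_of_le
        (fun n => integral_nonneg fun s => norm_nonneg _)
        (fun n => ?_)
        (((Real.summable_pow_div_factorial (bbar * t)).mul_left (bbar ^ 2 * t)))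
      have hbd : ∀ s ∈ Ioc (0 : ℝ) t,
          ‖‖g (t - s) * c' n s‖‖ ≤ bbar * (bbar ^ (n + 1) * t ^ n / n.factorial) := by
        intro s hs
        have hs0 : (0 : ℝ) ≤ s := le_of_lt hs.1
        have h1 := hg (t - s) (sub_nonneg.2 hs.2)
        have h2 := (main n).2 s hs0
        rw [norm_norm, hc'eq n s hs0, Real.norm_eq_abs, abs_of_nonneg (mul_nonneg h1.1 h2.1)]
        have hsn : s ^ n ≤ t ^ n := pow_le_pow_left₀ hs0 hs.2 n
        have hfac : (0 : ℝ) < n.factorial := by positivity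
        have : c n s ≤ bbar ^ (n + 1) * t ^ n / n.factorial := by
          refine h2.2.trans ?_
          gcongr
        exact mul_le_mul h1.2 this h2.1 (le_of_lt hbbar)
      have := norm_setIntegral_le_of_norm_le_const (μ := volume) (s := Ioc (0 : ℝ) t)
        measure_Ioc_lt_top hbd
      rw [Real.norm_of_nonneg (integral_nonneg fun s => norm_nonneg _)] at this
      refine this.trans (le_of_eq ?_)
      rw [Real.volume_real_Ioc_of_le ht, sub_zero]
      rw [mul_pow]
      have hfac : (0 : ℝ) ≠ n.factorial := by positivity
      field_simp
      ring
    have hswap : ∑' n : ℕ, ∫ s in Ioc (0 : ℝ) t, g (t - s) * c' n s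
        = ∫ s in Ioc (0 : ℝ) t, ∑' n : ℕ, g (t - s) * c' n s :=
      integral_tsum_of_summable_integral_norm hint hnormsum
    have hinner : ∫ s in Ioc (0 : ℝ) t, (∑' n : ℕ, g (t - s) * c' n s)
        = ∫ s in Ioc (0 : ℝ) t, g (t - s) * B s := by
      refine setIntegral_congr_fun measurableSet_Ioc fun s hs => ?_
      have hs0 : (0 : ℝ) ≤ s := le_of_lt hs.1
      have : (fun n : ℕ => g (t - s) * c' n s) = fun n : ℕ => g (t - s) * c n s := by
        funext n; rw [hc'eq n s hs0]
      rw [this, tsum_mul_left, ← hB]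
    rw [hB, Summable.tsum_eq_zero_add (hsum t ht), hc0]
    congr 1
    calc ∑' n : ℕ, c (n + 1) t
        = ∑' n : ℕ, ∫ s in Ioc (0 : ℝ) t, g (t - s) * c' n s := tsum_congr key
      _ = ∫ s in Ioc (0 : ℝ) t, g (t - s) * B s := by rw [hswap, hinner]
      _ = ∫ s in (0 : ℝ)..t, g (t - s) * B s := (intervalIntegral.integral_of_le ht).symm
end

section
/- The function v solves the linear McKendrick–von Foerster equation along characteristics off the diagonal: for every a, t ≥ 0 with a ≠ t, the map s ↦ v(a + s, t + s), defined for s in a neighbourhood of 0, is differentiable at s = 0 with derivative −d(a) · v(a, t). -/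
open MeasureTheory Set

/-- The function `v(a,t) = n₀(a-t) Π(a-t,a)/N₀` for `a ≥ t` and
`v(a,t) = B(t-a) Π(0,a)` for `a < t`. -/
noncomputable def vSol (d n₀ : ℝ → ℝ) (N₀ : ℝ) (B : ℝ → ℝ) (a t : ℝ) : ℝ :=
  if t ≤ a then n₀ (a - t) * survival d (a - t) a / N₀ else B (t - a) * survival d 0 a

lemma survival_hasDerivAt (d : ℝ → ℝ) (hdcont : Continuous d) (c a : ℝ) :
    HasDerivAt (fun s => survival d c (a + s)) (-(d a) * survival d c a) 0 := by
  have h1 : HasDerivAt (fun x => ∫ α in c..x, d α) (d a) a :=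
    intervalIntegral.integral_hasDerivAt_right (hdcont.intervalIntegrable c a)
      hdcont.stronglyMeasurable.stronglyMeasurableAtFilter hdcont.continuousAt
  have h2 : HasDerivAt (fun x => survival d c x) (-(d a) * survival d c a) a := by
    have := (h1.neg).exp
    simpa [survival, mul_comm] using this
  have h3 : HasDerivAt (fun s : ℝ => a + s) 1 0 := by
    simpa using (hasDerivAt_id (0:ℝ)).const_add a
  have := HasDerivAt.comp (0:ℝ) (by simpa using h2 : HasDerivAt (fun x => survival d c x) (-(d a) * survival d c a) (a + 0)) h3
  simpa [Function.comp_def] using this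

/-- `v` solves the linear McKendrick–von Foerster equation along the characteristics
off the diagonal: for `a, t ≥ 0` with `a ≠ t`, `s ↦ v(a+s, t+s)` is differentiable at
`s = 0` with derivative `-d(a) v(a,t)`. -/
theorem vSol_mckendrick_along_characteristics
    (d n₀ : ℝ → ℝ) (dlow : ℝ)
    (hdcont : Continuous d) (hdlow : ∀ a, 0 ≤ a → dlow ≤ d a) (hdlowpos : 0 < dlow)
    (hn₀ : ∀ a, 0 ≤ a → 0 ≤ n₀ a) (hn₀int : IntegrableOn n₀ (Ioi (0 : ℝ)))
    (hN₀ : 0 < ∫ a in Ioi (0 : ℝ), n₀ a)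
    (B : ℝ → ℝ) :
    ∀ a t : ℝ, 0 ≤ a → 0 ≤ t → a ≠ t →
      HasDerivAt (fun s => vSol d n₀ (∫ α in Ioi (0 : ℝ), n₀ α) B (a + s) (t + s))
        (-(d a) * vSol d n₀ (∫ α in Ioi (0 : ℝ), n₀ α) B a t) 0 := by
  intro a t _ _ _
  set N₀ := ∫ α in Ioi (0 : ℝ), n₀ α
  by_cases h : t ≤ a
  · have key : (fun s => vSol d n₀ N₀ B (a + s) (t + s))
        = fun s => n₀ (a - t) * survival d (a - t) (a + s) / N₀ := by
      funext s
      have : t + s ≤ a + s := by linarith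
      simp [vSol, this, show a + s - (t + s) = a - t by ring]
    rw [key]
    have H := ((survival_hasDerivAt d hdcont (a - t) a).const_mul (n₀ (a - t))).div_const N₀
    simp only [mul_div_assoc] at H ⊢
    have : vSol d n₀ N₀ B a t = n₀ (a - t) * (survival d (a - t) a / N₀) := by
      simp [vSol, h, mul_div_assoc]
    rw [this]
    convert H using 1
    · rfl
    · rfl
    ring
  · have key : (fun s => vSol d n₀ N₀ B (a + s) (t + s))
        = fun s => B (t - a) * survival d 0 (a + s) := by
      funext s
      have : ¬ (t + s ≤ a + s) := by intro hc; exact h (by linarith)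
      simp [vSol, this, show t + s - (a + s) = t - a by ring]
    rw [key]
    have H := (survival_hasDerivAt d hdcont 0 a).const_mul (B (t - a))
    have hv : vSol d n₀ N₀ B a t = B (t - a) * survival d 0 a := by simp [vSol, h]
    rw [hv]
    convert H using 1
    · rfl
    · rfl
    ring
end

section
/- Set B₀(t) = ∫₀^∞ b(α + t) (n₀(α) / N₀) Π(α, α + t) dα and g(a) = b(a) Π(0, a) for a ≥ 0. If B : [0, ∞) → ℝ is measurable, bounded on compact intervals, and satisfies the renewal equation B(t) = B₀(t) + ∫₀^t g(t − s) B(s) ds for all t ≥ 0, then the function v built from n₀ and B satisfies the birth boundary condition ∫₀^∞ b(a) v(a, t) da = B(t) for every t ≥ 0; in particular v(0, t) = ∫₀^∞ b(a) v(a, t) da for t > 0. -/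
open MeasureTheory Set

set_option maxHeartbeats 1000000

lemma integral_Ioi_shift (f : ℝ → ℝ) (t : ℝ) :
    (∫ a in Ioi t, f a) = ∫ α in Ioi (0 : ℝ), f (α + t) := by
  have hmp : MeasurePreserving (fun x : ℝ => x + t) volume volume :=
    measurePreserving_add_right volume t
  have hemb : MeasurableEmbedding (fun x : ℝ => x + t) := measurableEmbedding_addRight t
  have h := hmp.setIntegral_preimage_emb hemb f (Ioi t)
  rw [← h]
  congr 1
  ext x
  simp

lemma integrableOn_shift (f : ℝ → ℝ) (t : ℝ) (hf : IntegrableOn f (Ioi (0 : ℝ))) :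
    IntegrableOn (fun a => f (a - t)) (Ioi t) := by
  have hemb : MeasurableEmbedding (fun x : ℝ => x + t) := measurableEmbedding_addRight t
  have h1 : (volume : Measure ℝ).restrict (Ioi t)
      = Measure.map (fun x : ℝ => x + t) (volume.restrict (Ioi 0)) := by
    have h := (MeasurableEquiv.addRight t).restrict_map volume (Ioi t)
    have hc : ⇑(MeasurableEquiv.addRight t) = fun x : ℝ => x + t := rfl
    rw [hc, (measurePreserving_add_right volume t).map_eq] at h
    rw [h]
    congr 1
    ext x
    simp
  rw [IntegrableOn, h1, hemb.integrable_map_iff]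
  have : ((fun a => f (a - t)) ∘ fun x : ℝ => x + t) = f := by
    ext x; simp
  rwa [this]

/-- If `B` solves the renewal equation with `B₀(t) = ∫₀^∞ b(α+t) (n₀(α)/N₀) Π(α,α+t) dα`
and `g(a) = b(a) Π(0,a)`, then `v` built from `n₀` and `B` satisfies the birth boundary
condition `∫₀^∞ b(a) v(a,t) da = B(t)`; in particular `v(0,t) = ∫₀^∞ b(a) v(a,t) da`
for `t > 0`. -/
theorem vSol_boundary_condition
    (b d n₀ : ℝ → ℝ) (bbar dlow : ℝ)
    (hbcont : Continuous b) (hb0 : ∀ a, 0 ≤ b a) (hbbar : ∀ a, b a ≤ bbar)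
    (hbbarpos : 0 < bbar)
    (hdcont : Continuous d) (hdlow : ∀ a, 0 ≤ a → dlow ≤ d a) (hdlowpos : 0 < dlow)
    (hn₀ : ∀ a, 0 ≤ a → 0 ≤ n₀ a) (hn₀int : IntegrableOn n₀ (Ioi (0 : ℝ)))
    (N₀ : ℝ) (hN₀def : N₀ = ∫ a in Ioi (0 : ℝ), n₀ a) (hN₀pos : 0 < N₀)
    (B : ℝ → ℝ) (hBmeas : Measurable B)
    (hBbdd : ∀ T, 0 < T → ∃ M, ∀ t ∈ Icc (0 : ℝ) T, |B t| ≤ M)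
    (hBeq : ∀ t, 0 ≤ t →
      B t = (∫ α in Ioi (0 : ℝ), b (α + t) * (n₀ α / N₀) * survival d α (α + t)) +
        ∫ s in (0 : ℝ)..t, b (t - s) * survival d 0 (t - s) * B s) :
    (∀ t, 0 ≤ t → (∫ a in Ioi (0 : ℝ), b a * vSol d n₀ N₀ B a t) = B t) ∧
    (∀ t, 0 < t → vSol d n₀ N₀ B 0 t = ∫ a in Ioi (0 : ℝ), b a * vSol d n₀ N₀ B a t) := by
  have hdint : ∀ a c : ℝ, IntervalIntegrable d volume a c := fun a c =>
    hdcont.intervalIntegrable a c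
  have hsurv_pos : ∀ a c : ℝ, 0 < survival d a c := fun a c => Real.exp_pos _
  have hsurv_le_one : ∀ a c : ℝ, 0 ≤ a → a ≤ c → survival d a c ≤ 1 := by
    intro a c ha hac
    have hnn : 0 ≤ ∫ α in a..c, d α := by
      apply intervalIntegral.integral_nonneg hac
      intro u hu
      exact le_trans hdlowpos.le (hdlow u (ha.trans hu.1))
    simpa [survival] using Real.exp_le_one_iff.mpr (neg_nonpos.mpr hnn)
  have hprim : Continuous fun x : ℝ => ∫ s in (0:ℝ)..x, d s :=
    intervalIntegral.continuous_primitive (fun a c => hdint a c) 0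
  have hsurv0cont : Continuous fun a : ℝ => survival d 0 a := by
    unfold survival
    exact hprim.neg.rexp
  have hsurvshift : ∀ t : ℝ, Continuous fun a : ℝ => survival d (a - t) a := by
    intro t
    have key : ∀ a : ℝ, survival d (a - t) a
        = Real.exp (-((∫ s in (0:ℝ)..a, d s) - ∫ s in (0:ℝ)..(a - t), d s)) := by
      intro a
      unfold survival
      congr 2
      rw [← intervalIntegral.integral_interval_sub_left (hdint 0 a) (hdint 0 (a - t))]
    simp only [key]
    exact (hprim.sub (hprim.comp (continuous_id.sub continuous_const))).neg.rexp
  have main : ∀ t, 0 ≤ t → (∫ a in Ioi (0 : ℝ), b a * vSol d n₀ N₀ B a t) = B t := by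
    intro t ht
    set f : ℝ → ℝ := fun a => b a * vSol d n₀ N₀ B a t with hfdef
    set g₁ : ℝ → ℝ := fun a => b a * (B (t - a) * survival d 0 a) with hg₁def
    set g₂ : ℝ → ℝ := fun a => b a * (n₀ (a - t) * survival d (a - t) a / N₀) with hg₂def
    have htne : ∀ᵐ a : ℝ, a ≠ t := by
      rw [MeasureTheory.ae_iff]
      have he : {a : ℝ | ¬ a ≠ t} = {t} := by ext x; simp
      rw [he]
      exact Real.volume_singleton
    obtain ⟨M, hM⟩ : ∃ M, ∀ s ∈ Icc (0 : ℝ) t, |B s| ≤ M := by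
      rcases eq_or_lt_of_le ht with h | h
      · exact ⟨|B 0|, fun s hs => by
          have : s = 0 := le_antisymm (h ▸ hs.2) hs.1
          simp [this]⟩
      · exact hBbdd t h
    -- integrability of g₁ on Ioc 0 t
    have hg₁meas : AEStronglyMeasurable g₁ (volume.restrict (Ioc 0 t)) := by
      apply Measurable.aestronglyMeasurable
      exact hbcont.measurable.mul
        ((hBmeas.comp (measurable_const.sub measurable_id)).mul hsurv0cont.measurable)
    have hg₁int : IntegrableOn g₁ (Ioc 0 t) := by
      have hconst : IntegrableOn (fun _ : ℝ => bbar * (M * 1)) (Ioc 0 t) volume := by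
        apply (integrableOn_const_iff).mpr
        right
        exact measure_Ioc_lt_top
      apply Integrable.mono' hconst hg₁meas
      filter_upwards [ae_restrict_mem measurableSet_Ioc] with a ha
      have ha0 : (0:ℝ) ≤ a := ha.1.le
      have hBa : |B (t - a)| ≤ M := hM _ ⟨by linarith [ha.2], by linarith [ha.1.le]⟩
      have hsle : survival d 0 a ≤ 1 := hsurv_le_one 0 a le_rfl ha0
      have hMnn : 0 ≤ M := le_trans (abs_nonneg _) hBa
      rw [Real.norm_eq_abs, hg₁def, abs_mul, abs_mul, abs_of_nonneg (hb0 a),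
        abs_of_nonneg (hsurv_pos 0 a).le]
      apply mul_le_mul (hbbar a) _ (mul_nonneg (abs_nonneg _) (hsurv_pos 0 a).le) hbbarpos.le
      exact mul_le_mul hBa hsle (hsurv_pos 0 a).le hMnn
    -- integrability of g₂ on Ioi t
    have hn₀shift : IntegrableOn (fun a => n₀ (a - t)) (Ioi t) :=
      integrableOn_shift n₀ t hn₀int
    have hg₂meas : AEStronglyMeasurable g₂ (volume.restrict (Ioi t)) := by
      have h2 : AEStronglyMeasurable (fun a : ℝ => b a * (survival d (a - t) a / N₀))
          (volume.restrict (Ioi t)) :=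
        (hbcont.mul ((hsurvshift t).div_const N₀)).aestronglyMeasurable
      have h3 := h2.mul hn₀shift.aestronglyMeasurable
      apply h3.congr
      apply Filter.Eventually.of_forall
      intro a
      show b a * (survival d (a - t) a / N₀) * n₀ (a - t) = _
      simp only [hg₂def]
      ring
    have hg₂int : IntegrableOn g₂ (Ioi t) := by
      apply Integrable.mono' ((hn₀shift.norm).const_mul (bbar / N₀)) hg₂meas
      filter_upwards [ae_restrict_mem measurableSet_Ioi] with a ha
      have hat : t ≤ a := le_of_lt ha
      have hsle : survival d (a - t) a ≤ 1 :=
        hsurv_le_one (a - t) a (by linarith) (by linarith)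
      have hspos := (hsurv_pos (a - t) a).le
      rw [Real.norm_eq_abs, Real.norm_eq_abs, hg₂def, abs_mul, abs_of_nonneg (hb0 a),
        abs_div, abs_of_nonneg hN₀pos.le, abs_mul, abs_of_nonneg hspos]
      have step : b a * (|n₀ (a - t)| * survival d (a - t) a / N₀)
          ≤ bbar * (|n₀ (a - t)| * 1 / N₀) := by
        apply mul_le_mul (hbbar a) _
          (div_nonneg (mul_nonneg (abs_nonneg _) hspos) hN₀pos.le) hbbarpos.le
        exact (div_le_div_iff_of_pos_right hN₀pos).mpr
          (mul_le_mul_of_nonneg_left hsle (abs_nonneg _))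
      refine le_trans step (le_of_eq ?_)
      ring
    -- f agrees a.e. with g₁ on Ioc 0 t and with g₂ on Ioi t
    have hfg₁ : f =ᵐ[volume.restrict (Ioc 0 t)] g₁ := by
      filter_upwards [ae_restrict_mem measurableSet_Ioc, ae_restrict_of_ae htne] with a ha hne
      have hlt : a < t := lt_of_le_of_ne ha.2 hne
      simp only [hfdef, hg₁def, vSol, if_neg (not_le.mpr hlt)]
    have hfg₂ : EqOn f g₂ (Ioi t) := by
      intro a ha
      simp only [hfdef, hg₂def, vSol, if_pos (le_of_lt (mem_Ioi.mp ha))]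
    have hfint1 : IntegrableOn f (Ioc 0 t) := hg₁int.congr hfg₁.symm
    have hfint2 : IntegrableOn f (Ioi t) :=
      hg₂int.congr (Filter.EventuallyEq.symm
        ((ae_restrict_mem measurableSet_Ioi).mono fun a ha => hfg₂ ha))
    have hsplit : (∫ a in Ioi (0:ℝ), f a) = (∫ a in Ioc 0 t, f a) + ∫ a in Ioi t, f a := by
      rw [← setIntegral_union Ioc_disjoint_Ioi_same measurableSet_Ioi hfint1 hfint2,
        Ioc_union_Ioi_eq_Ioi ht]
    have hv1 : (∫ a in Ioc 0 t, f a)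
        = ∫ s in (0:ℝ)..t, b (t - s) * survival d 0 (t - s) * B s := by
      rw [integral_congr_ae hfg₁, ← intervalIntegral.integral_of_le ht]
      have hcs := intervalIntegral.integral_comp_sub_left (a := 0) (b := t)
        (fun s => b (t - s) * survival d 0 (t - s) * B s) t
      rw [sub_zero, sub_self] at hcs
      rw [← hcs]
      apply intervalIntegral.integral_congr
      intro x _
      simp only [hg₁def, sub_sub_cancel]
      ring
    have hv2 : (∫ a in Ioi t, f a)
        = ∫ α in Ioi (0:ℝ), b (α + t) * (n₀ α / N₀) * survival d α (α + t) := by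
      rw [setIntegral_congr_fun measurableSet_Ioi hfg₂, integral_Ioi_shift g₂ t]
      apply setIntegral_congr_fun measurableSet_Ioi
      intro α _
      simp only [hg₂def, add_sub_cancel_right]
      ring
    rw [hsplit, hv1, hv2, hBeq t ht]
    ring
  refine ⟨main, fun t ht => ?_⟩
  have h0 : vSol d n₀ N₀ B 0 t = B t := by
    rw [vSol, if_neg (by linarith)]
    simp [survival]
  rw [h0, main t ht.le]
end

section
/- Let v : [0, ∞) × [0, ∞) → [0, ∞) be measurable such that V(t) = ∫₀^∞ v(a, t) da is finite for every t and continuous in t, let N₀, η > 0, and define D(t) = 1 + η N₀ ∫₀^t V(s) ds, n(a, t) = N₀ v(a, t) / D(t), and N(t) = ∫₀^∞ n(a, t) da. Then: (i) N(t) = N₀ V(t) / D(t) for all t ≥ 0; and (ii) if at a point (a, t) with a, t ≥ 0 the map s ↦ v(a + s, t + s) is differentiable at s = 0 with derivative −d(a) v(a, t) for a continuous function d, then s ↦ n(a + s, t + s) is differentiable at s = 0 with derivative −(d(a) + η N(t)) · n(a, t). That is, the normalization by D transforms a solution of the linear McKendrick–von Foerster equation into a solution of the Gurtin–McCamy equation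 with logistic death rate d(a) + η N(t). -/
open MeasureTheory Set

/-- Total mass `V(t) = ∫₀^∞ v(a,t) da`. -/
noncomputable def Vmass (v : ℝ → ℝ → ℝ) (t : ℝ) : ℝ := ∫ a in Ioi (0 : ℝ), v a t

/-- Normalizing denominator `D(t) = 1 + η N₀ ∫₀^t V(s) ds`. -/
noncomputable def Dnorm (v : ℝ → ℝ → ℝ) (η N₀ t : ℝ) : ℝ :=
  1 + η * N₀ * ∫ s in (0 : ℝ)..t, Vmass v s

/-- Normalized density `n(a,t) = N₀ v(a,t) / D(t)`. -/
noncomputable def nNorm (v : ℝ → ℝ → ℝ) (η N₀ a t : ℝ) : ℝ :=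
  N₀ * v a t / Dnorm v η N₀ t

/-- Total population `N(t) = ∫₀^∞ n(a,t) da`. -/
noncomputable def Npop (v : ℝ → ℝ → ℝ) (η N₀ t : ℝ) : ℝ :=
  ∫ a in Ioi (0 : ℝ), nNorm v η N₀ a t

/-- The normalization `n = N₀ v / D` transforms a solution `v` of the linear
McKendrick–von Foerster equation into a solution of the Gurtin–McCamy equation with
logistic death rate `d(a) + η N(t)`:
(i) `N(t) = N₀ V(t)/D(t)`, and (ii) whenever `s ↦ v(a+s,t+s)` has derivative
`-d(a) v(a,t)` at `s = 0`, the map `s ↦ n(a+s,t+s)` has derivative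
`-(d(a) + η N(t)) n(a,t)` at `s = 0`. -/
theorem normalization_transforms_linear_to_logistic
    (d : ℝ → ℝ) (hdcont : Continuous d)
    (v : ℝ → ℝ → ℝ) (hvmeas : Measurable (Function.uncurry v))
    (hvnonneg : ∀ a t, 0 ≤ a → 0 ≤ t → 0 ≤ v a t)
    (hvint : ∀ t, IntegrableOn (fun a => v a t) (Ioi (0 : ℝ)))
    (hVcont : Continuous (Vmass v))
    (N₀ η : ℝ) (hN₀ : 0 < N₀) (hη : 0 < η) :
    (∀ t, 0 ≤ t → Npop v η N₀ t = N₀ * Vmass v t / Dnorm v η N₀ t) ∧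
    (∀ a t, 0 ≤ a → 0 ≤ t →
      HasDerivAt (fun s => v (a + s) (t + s)) (-(d a) * v a t) 0 →
      HasDerivAt (fun s => nNorm v η N₀ (a + s) (t + s))
        (-(d a + η * Npop v η N₀ t) * nNorm v η N₀ a t) 0) := by
  -- V is nonnegative for nonnegative times
  have hVnonneg : ∀ t : ℝ, 0 ≤ t → 0 ≤ Vmass v t := by
    intro t ht
    apply setIntegral_nonneg measurableSet_Ioi
    intro a ha
    exact hvnonneg a t (le_of_lt ha) ht
  -- D is positive for nonnegative times
  have hDpos : ∀ t : ℝ, 0 ≤ t → 0 < Dnorm v η N₀ t := by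
    intro t ht
    have hI : 0 ≤ ∫ s in (0 : ℝ)..t, Vmass v s := by
      apply intervalIntegral.integral_nonneg ht
      intro s hs
      exact hVnonneg s hs.1
    have : 0 ≤ η * N₀ * ∫ s in (0 : ℝ)..t, Vmass v s :=
      mul_nonneg (mul_nonneg hη.le hN₀.le) hI
    unfold Dnorm
    linarith
  -- Part (i)
  have hNpop : ∀ t, 0 ≤ t → Npop v η N₀ t = N₀ * Vmass v t / Dnorm v η N₀ t := by
    intro t ht
    have : Npop v η N₀ t = ∫ a in Ioi (0 : ℝ), (N₀ / Dnorm v η N₀ t) * v a t := by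
      unfold Npop nNorm
      congr 1
      ext a
      ring
    rw [this, MeasureTheory.integral_const_mul]
    unfold Vmass
    ring
  refine ⟨hNpop, ?_⟩
  intro a t ha ht hv
  -- derivative of D along characteristics
  have hFTC : HasDerivAt (fun u => ∫ s in (0 : ℝ)..u, Vmass v s) (Vmass v t) t :=
    (hVcont.integral_hasStrictDerivAt 0 t).hasDerivAt
  have hshift : HasDerivAt (fun s : ℝ => t + s) 1 0 := by
    simpa using (hasDerivAt_id (0 : ℝ)).const_add t
  have hFTC' : HasDerivAt (fun u => ∫ s in (0 : ℝ)..u, Vmass v s) (Vmass v t)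
      ((fun s : ℝ => t + s) 0) := by simpa using hFTC
  have hIcomp : HasDerivAt (fun s : ℝ => ∫ u in (0 : ℝ)..(t + s), Vmass v u)
      (Vmass v t) 0 := by
    have := hFTC'.comp 0 hshift
    rw [mul_one] at this; exact this
  have hD : HasDerivAt (fun s : ℝ => Dnorm v η N₀ (t + s)) (η * N₀ * Vmass v t) 0 := by
    unfold Dnorm
    simpa using (hIcomp.const_mul (η * N₀)).const_add 1
  have hDne : Dnorm v η N₀ (t + 0) ≠ 0 := by
    rw [add_zero]; exact (hDpos t ht).ne'
  have hnum : HasDerivAt (fun s => N₀ * v (a + s) (t + s)) (N₀ * (-(d a) * v a t)) 0 :=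
    hv.const_mul N₀
  have hdiv := hnum.div hD hDne
  have heq : (N₀ * (-(d a) * v a t) * Dnorm v η N₀ (t + 0)
        - N₀ * v (a + 0) (t + 0) * (η * N₀ * Vmass v t)) / Dnorm v η N₀ (t + 0) ^ 2
      = -(d a + η * Npop v η N₀ t) * nNorm v η N₀ a t := by
    rw [add_zero, add_zero, hNpop t ht]
    unfold nNorm
    have hD0 := (hDpos t ht).ne'
    field_simp
    ring
  have : (fun s => N₀ * v (a + s) (t + s) / Dnorm v η N₀ (t + s))
      = fun s => nNorm v η N₀ (a + s) (t + s) := rfl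
  rw [heq] at hdiv
  exact hdiv
end

section
/- (Uniqueness for the logistic Gurtin–McCamy equation.) Let n₁, n₂ : [0, ∞) × [0, ∞) → [0, ∞) be continuous functions such that for each i and each t ≥ 0 the function a ↦ n_i(a, t) is integrable with N_i(t) = ∫₀^∞ n_i(a, t) da continuous in t; suppose that for all a, t ≥ 0 the map s ↦ n_i(a + s, t + s) is differentiable at s = 0 with derivative −(d(a) + η N_i(t)) n_i(a, t), that n_i(0, t) = ∫₀^∞ b(a) n_i(a, t) da for all t ≥ 0, and that n₁(a, 0) = n₂(a, 0) for all a ≥ 0. Then n₁ = n₂. -/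
open MeasureTheory Set

/-- Shifted derivative along characteristics. -/
lemma gm_deriv_shift (d : ℝ → ℝ) (η : ℝ) (N : ℝ → ℝ) (n : ℝ → ℝ → ℝ)
    (hd : ∀ a t, 0 ≤ a → 0 ≤ t →
      HasDerivAt (fun s => n (a + s) (t + s)) (-(d a + η * N t) * n a t) 0)
    (a₁ t₁ : ℝ) (ha₁ : 0 ≤ a₁) (ht₁ : 0 ≤ t₁) {s : ℝ} (hs : 0 ≤ s) :
    HasDerivAt (fun s' => n (a₁ + s') (t₁ + s'))
      (-(d (a₁ + s) + η * N (t₁ + s)) * n (a₁ + s) (t₁ + s)) s := by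
  have h := hd (a₁ + s) (t₁ + s) (by linarith) (by linarith)
  have hg : HasDerivAt (fun s' : ℝ => s' - s) 1 s := by
    simpa using (hasDerivAt_id s).sub_const s
  have h0 : (fun s' : ℝ => s' - s) s = 0 := by simp
  have hc := HasDerivAt.comp (h₂ := fun u => n (a₁ + s + u) (t₁ + s + u)) s (h0 ▸ h) hg
  have heq : ((fun u => n (a₁ + s + u) (t₁ + s + u)) ∘ fun s' => s' - s)
      = fun s' => n (a₁ + s') (t₁ + s') := by
    funext x
    have h1 : a₁ + s + (x - s) = a₁ + x := by ring
    have h2 : t₁ + s + (x - s) = t₁ + x := by ring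
    simp [Function.comp, h1, h2]
  rw [heq, mul_one] at hc
  exact hc

/-- Continuity along characteristics. -/
lemma gm_cont_char (n : ℝ → ℝ → ℝ)
    (hcont : ContinuousOn (Function.uncurry n) (Ici (0:ℝ) ×ˢ Ici (0:ℝ)))
    (a₁ t₁ : ℝ) (ha₁ : 0 ≤ a₁) (ht₁ : 0 ≤ t₁) :
    ContinuousOn (fun s => n (a₁ + s) (t₁ + s)) (Ici (0:ℝ)) := by
  have hmap : MapsTo (fun s : ℝ => ((a₁ + s, t₁ + s) : ℝ × ℝ)) (Ici 0) (Ici 0 ×ˢ Ici 0) := by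
    intro s hs
    exact ⟨by simp only [mem_Ici] at hs ⊢; linarith, by simp only [mem_Ici] at hs ⊢; linarith⟩
  exact hcont.comp ((continuous_const.add continuous_id).prodMk
    (continuous_const.add continuous_id)).continuousOn hmap

/-- Monotonicity along characteristics. -/
lemma gm_antitone (d : ℝ → ℝ) (η : ℝ) (N : ℝ → ℝ) (n : ℝ → ℝ → ℝ)
    (hd0 : ∀ a, 0 ≤ a → 0 ≤ d a) (hη : 0 ≤ η) (hN0 : ∀ t, 0 ≤ t → 0 ≤ N t)
    (hnn : ∀ a t, 0 ≤ a → 0 ≤ t → 0 ≤ n a t)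
    (hcont : ContinuousOn (Function.uncurry n) (Ici (0:ℝ) ×ˢ Ici (0:ℝ)))
    (hd : ∀ a t, 0 ≤ a → 0 ≤ t →
      HasDerivAt (fun s => n (a + s) (t + s)) (-(d a + η * N t) * n a t) 0)
    (a₁ t₁ : ℝ) (ha₁ : 0 ≤ a₁) (ht₁ : 0 ≤ t₁) :
    AntitoneOn (fun s => n (a₁ + s) (t₁ + s)) (Ici (0:ℝ)) := by
  apply antitoneOn_of_deriv_nonpos (convex_Ici 0)
  · exact gm_cont_char n hcont a₁ t₁ ha₁ ht₁
  · rw [interior_Ici]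
    intro s hs
    exact (gm_deriv_shift d η N n hd a₁ t₁ ha₁ ht₁ (le_of_lt hs)).differentiableAt.differentiableWithinAt
  · rw [interior_Ici]
    intro s hs
    have hs' : (0:ℝ) ≤ s := le_of_lt hs
    rw [(gm_deriv_shift d η N n hd a₁ t₁ ha₁ ht₁ hs').deriv]
    have : 0 ≤ (d (a₁ + s) + η * N (t₁ + s)) * n (a₁ + s) (t₁ + s) :=
      mul_nonneg (add_nonneg (hd0 _ (by linarith)) (mul_nonneg hη (hN0 _ (by linarith))))
        (hnn _ _ (by linarith) (by linarith))
    linarith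



/-- Key estimate along a characteristic segment. -/
lemma gm_char_est (d : ℝ → ℝ) (η : ℝ) (N₁ N₂ : ℝ → ℝ) (n₁ n₂ : ℝ → ℝ → ℝ)
    (hdcont : Continuous d) (hd0 : ∀ a, 0 ≤ a → 0 ≤ d a) (hη : 0 ≤ η)
    (hN₁cont : ContinuousOn N₁ (Ici (0:ℝ))) (hN₂cont : ContinuousOn N₂ (Ici (0:ℝ)))
    (hN₁0 : ∀ t, 0 ≤ t → 0 ≤ N₁ t)
    (hcont₂ : ContinuousOn (Function.uncurry n₂) (Ici (0:ℝ) ×ˢ Ici (0:ℝ)))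
    (hnn₂ : ∀ a t, 0 ≤ a → 0 ≤ t → 0 ≤ n₂ a t)
    (hd₁ : ∀ a t, 0 ≤ a → 0 ≤ t →
      HasDerivAt (fun s => n₁ (a + s) (t + s)) (-(d a + η * N₁ t) * n₁ a t) 0)
    (hd₂ : ∀ a t, 0 ≤ a → 0 ≤ t →
      HasDerivAt (fun s => n₂ (a + s) (t + s)) (-(d a + η * N₂ t) * n₂ a t) 0)
    (a₁ t₁ m : ℝ) (ha₁ : 0 ≤ a₁) (ht₁ : 0 ≤ t₁) (hm : 0 ≤ m) :
    |n₁ (a₁ + m) (t₁ + m) - n₂ (a₁ + m) (t₁ + m)| ≤ |n₁ a₁ t₁ - n₂ a₁ t₁|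
      + η * ∫ σ in (0:ℝ)..m, |N₁ (t₁ + σ) - N₂ (t₁ + σ)| * n₂ (a₁ + σ) (t₁ + σ) := by
  -- the extended coefficient
  set f : ℝ → ℝ := fun σ => d (a₁ + σ) + η * N₁ (max (t₁ + σ) 0) with hfdef
  have hfc : Continuous f := by
    apply Continuous.add
    · exact hdcont.comp (continuous_const.add continuous_id)
    · apply continuous_const.mul
      exact hN₁cont.comp_continuous
        ((continuous_const.add continuous_id).max continuous_const)
        (fun σ => mem_Ici.2 (le_max_right _ _))
  have hf0 : ∀ σ, 0 ≤ σ → 0 ≤ f σ := by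
    intro σ hσ
    exact add_nonneg (hd0 _ (by linarith)) (mul_nonneg hη (hN₁0 _ (le_max_right _ _)))
  set D : ℝ → ℝ := fun s => ∫ σ in (0:ℝ)..s, f σ with hDdef
  have hD : ∀ s : ℝ, HasDerivAt D (f s) s := by
    intro s
    exact intervalIntegral.integral_hasDerivAt_right (hfc.intervalIntegrable _ _)
      (hfc.stronglyMeasurableAtFilter _ _) hfc.continuousAt
  have hD0eq : D 0 = 0 := intervalIntegral.integral_same
  have hDmono : ∀ σ, 0 ≤ σ → σ ≤ m → D σ ≤ D m := by
    intro σ h0 hm'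
    have hadd : D σ + ∫ x in σ..m, f x = D m :=
      intervalIntegral.integral_add_adjacent_intervals
        (hfc.intervalIntegrable _ _) (hfc.intervalIntegrable _ _)
    have hpos : 0 ≤ ∫ x in σ..m, f x :=
      intervalIntegral.integral_nonneg hm' (fun x hx => hf0 x (le_trans h0 hx.1))
    linarith
  have hDm0 : 0 ≤ D m := by
    have := hDmono 0 le_rfl hm
    rwa [hD0eq] at this
  have hmax : ∀ s : ℝ, 0 ≤ s → max (t₁ + s) 0 = t₁ + s :=
    fun s hs => max_eq_left (by linarith)
  -- derivative of W
  have hW : ∀ s ∈ Icc (0:ℝ) m,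
      HasDerivAt (fun s' => Real.exp (D s') * (n₁ (a₁ + s') (t₁ + s') - n₂ (a₁ + s') (t₁ + s')))
        (Real.exp (D s) * (-(η * ((N₁ (t₁ + s) - N₂ (t₁ + s)) * n₂ (a₁ + s) (t₁ + s))))) s := by
    intro s hs
    have h1 := gm_deriv_shift d η N₁ n₁ hd₁ a₁ t₁ ha₁ ht₁ hs.1
    have h2 := gm_deriv_shift d η N₂ n₂ hd₂ a₁ t₁ ha₁ ht₁ hs.1
    have hw := h1.sub h2
    have he : HasDerivAt (fun s' => Real.exp (D s')) (Real.exp (D s) * f s) s := (hD s).exp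
    have hprod := he.mul hw
    have hfs : f s = d (a₁ + s) + η * N₁ (t₁ + s) := by
      rw [hfdef]; simp only [hmax s hs.1]
    have hval : Real.exp (D s) * f s * (n₁ (a₁ + s) (t₁ + s) - n₂ (a₁ + s) (t₁ + s))
        + Real.exp (D s) * (-(d (a₁ + s) + η * N₁ (t₁ + s)) * n₁ (a₁ + s) (t₁ + s)
          - -(d (a₁ + s) + η * N₂ (t₁ + s)) * n₂ (a₁ + s) (t₁ + s))
        = Real.exp (D s) * (-(η * ((N₁ (t₁ + s) - N₂ (t₁ + s)) * n₂ (a₁ + s) (t₁ + s)))) := by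
      rw [hfs]; ring
    rw [← hval]
    exact hprod
  -- continuity of the integrand
  have hintg : ContinuousOn
      (fun σ => Real.exp (D σ) * (-(η * ((N₁ (t₁ + σ) - N₂ (t₁ + σ)) * n₂ (a₁ + σ) (t₁ + σ)))))
      (Icc (0:ℝ) m) := by
    have hDc : Continuous D := continuous_iff_continuousAt.2 fun s => (hD s).continuousAt
    have hmapt : MapsTo (fun σ : ℝ => t₁ + σ) (Icc (0:ℝ) m) (Ici (0:ℝ)) := by
      intro σ hσ; simp only [mem_Ici]; have := hσ.1; linarith
    have hN1c : ContinuousOn (fun σ => N₁ (t₁ + σ)) (Icc (0:ℝ) m) :=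
      hN₁cont.comp (continuous_const.add continuous_id).continuousOn hmapt
    have hN2c : ContinuousOn (fun σ => N₂ (t₁ + σ)) (Icc (0:ℝ) m) :=
      hN₂cont.comp (continuous_const.add continuous_id).continuousOn hmapt
    have hn2c : ContinuousOn (fun σ => n₂ (a₁ + σ) (t₁ + σ)) (Icc (0:ℝ) m) :=
      (gm_cont_char n₂ hcont₂ a₁ t₁ ha₁ ht₁).mono
        (fun σ hσ => by simp only [mem_Ici]; exact hσ.1)
    exact ((hDc.rexp).continuousOn.mul
      (((continuousOn_const.mul ((hN1c.sub hN2c).mul hn2c))).neg))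
  have hWint : IntervalIntegrable
      (fun σ => Real.exp (D σ) * (-(η * ((N₁ (t₁ + σ) - N₂ (t₁ + σ)) * n₂ (a₁ + σ) (t₁ + σ)))))
      volume 0 m := by
    apply ContinuousOn.intervalIntegrable
    rwa [uIcc_of_le hm]
  -- FTC
  have hftc : ∫ σ in (0:ℝ)..m,
      Real.exp (D σ) * (-(η * ((N₁ (t₁ + σ) - N₂ (t₁ + σ)) * n₂ (a₁ + σ) (t₁ + σ))))
      = Real.exp (D m) * (n₁ (a₁ + m) (t₁ + m) - n₂ (a₁ + m) (t₁ + m))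
        - Real.exp (D 0) * (n₁ (a₁ + 0) (t₁ + 0) - n₂ (a₁ + 0) (t₁ + 0)) := by
    apply intervalIntegral.integral_eq_sub_of_hasDerivAt
    · intro s hs
      exact hW s (by rwa [uIcc_of_le hm] at hs)
    · exact hWint
  -- rearrange
  have hW0 : Real.exp (D 0) * (n₁ (a₁ + 0) (t₁ + 0) - n₂ (a₁ + 0) (t₁ + 0))
      = n₁ a₁ t₁ - n₂ a₁ t₁ := by
    rw [hD0eq]; simp
  have hwm : n₁ (a₁ + m) (t₁ + m) - n₂ (a₁ + m) (t₁ + m)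
      = Real.exp (-(D m)) * ((n₁ a₁ t₁ - n₂ a₁ t₁) + ∫ σ in (0:ℝ)..m,
          Real.exp (D σ) * (-(η * ((N₁ (t₁ + σ) - N₂ (t₁ + σ)) * n₂ (a₁ + σ) (t₁ + σ))))) := by
    rw [hftc, hW0]
    rw [Real.exp_neg]
    field_simp
    ring
  have hexple : Real.exp (-(D m)) ≤ 1 := by
    rw [Real.exp_le_one_iff]; linarith
  set I : ℝ := ∫ σ in (0:ℝ)..m,
      Real.exp (D σ) * (-(η * ((N₁ (t₁ + σ) - N₂ (t₁ + σ)) * n₂ (a₁ + σ) (t₁ + σ)))) with hIdef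
  have hmapt : MapsTo (fun σ : ℝ => t₁ + σ) (Icc (0:ℝ) m) (Ici (0:ℝ)) := by
    intro σ hσ; simp only [mem_Ici]; have := hσ.1; linarith
  have hN1c : ContinuousOn (fun σ => N₁ (t₁ + σ)) (Icc (0:ℝ) m) :=
    hN₁cont.comp (continuous_const.add continuous_id).continuousOn hmapt
  have hN2c : ContinuousOn (fun σ => N₂ (t₁ + σ)) (Icc (0:ℝ) m) :=
    hN₂cont.comp (continuous_const.add continuous_id).continuousOn hmapt
  have hn2c : ContinuousOn (fun σ => n₂ (a₁ + σ) (t₁ + σ)) (Icc (0:ℝ) m) :=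
    (gm_cont_char n₂ hcont₂ a₁ t₁ ha₁ ht₁).mono
      (fun σ hσ => by simp only [mem_Ici]; exact hσ.1)
  -- bound the integral of |W'|
  have hIabs : |I| ≤ ∫ σ in (0:ℝ)..m,
      |Real.exp (D σ) * (-(η * ((N₁ (t₁ + σ) - N₂ (t₁ + σ)) * n₂ (a₁ + σ) (t₁ + σ))))| :=
    intervalIntegral.abs_integral_le_integral_abs hm
  have habsint : IntervalIntegrable (fun σ =>
      |Real.exp (D σ) * (-(η * ((N₁ (t₁ + σ) - N₂ (t₁ + σ)) * n₂ (a₁ + σ) (t₁ + σ))))|)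
      volume 0 m := hWint.abs
  have hRHSint : IntervalIntegrable
      (fun σ => η * (|N₁ (t₁ + σ) - N₂ (t₁ + σ)| * n₂ (a₁ + σ) (t₁ + σ))) volume 0 m := by
    apply ContinuousOn.intervalIntegrable
    rw [uIcc_of_le hm]
    exact continuousOn_const.mul (((hN1c.sub hN2c).abs).mul hn2c)
  have hmono : ∫ σ in (0:ℝ)..m, Real.exp (-(D m))
        * |Real.exp (D σ) * (-(η * ((N₁ (t₁ + σ) - N₂ (t₁ + σ)) * n₂ (a₁ + σ) (t₁ + σ))))|
      ≤ ∫ σ in (0:ℝ)..m, η * (|N₁ (t₁ + σ) - N₂ (t₁ + σ)| * n₂ (a₁ + σ) (t₁ + σ)) := by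
    apply intervalIntegral.integral_mono_on hm (habsint.const_mul _) hRHSint
    intro σ hσ
    have hg2 : 0 ≤ n₂ (a₁ + σ) (t₁ + σ) := hnn₂ _ _ (by linarith [hσ.1]) (by linarith [hσ.1])
    have habs : |Real.exp (D σ) * (-(η * ((N₁ (t₁ + σ) - N₂ (t₁ + σ)) * n₂ (a₁ + σ) (t₁ + σ))))|
        = Real.exp (D σ) * (η * (|N₁ (t₁ + σ) - N₂ (t₁ + σ)| * n₂ (a₁ + σ) (t₁ + σ))) := by
      rw [abs_mul, abs_of_nonneg (Real.exp_pos _).le, abs_neg, abs_mul, abs_of_nonneg hη,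
        abs_mul, abs_of_nonneg hg2]
    rw [habs, ← mul_assoc, ← Real.exp_add]
    have h1 : Real.exp (-(D m) + D σ) ≤ 1 := by
      rw [Real.exp_le_one_iff]
      have := hDmono σ hσ.1 hσ.2
      linarith
    calc Real.exp (-(D m) + D σ) * (η * (|N₁ (t₁ + σ) - N₂ (t₁ + σ)| * n₂ (a₁ + σ) (t₁ + σ)))
        ≤ 1 * (η * (|N₁ (t₁ + σ) - N₂ (t₁ + σ)| * n₂ (a₁ + σ) (t₁ + σ))) := by
          apply mul_le_mul_of_nonneg_right h1
          exact mul_nonneg hη (mul_nonneg (abs_nonneg _) hg2)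
      _ = _ := one_mul _
  have hfinal : Real.exp (-(D m)) * |I| ≤ η * ∫ σ in (0:ℝ)..m,
      |N₁ (t₁ + σ) - N₂ (t₁ + σ)| * n₂ (a₁ + σ) (t₁ + σ) := by
    calc Real.exp (-(D m)) * |I|
        ≤ Real.exp (-(D m)) * ∫ σ in (0:ℝ)..m,
          |Real.exp (D σ) * (-(η * ((N₁ (t₁ + σ) - N₂ (t₁ + σ)) * n₂ (a₁ + σ) (t₁ + σ))))| :=
          mul_le_mul_of_nonneg_left hIabs (Real.exp_pos _).le
      _ = ∫ σ in (0:ℝ)..m, Real.exp (-(D m))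
          * |Real.exp (D σ) * (-(η * ((N₁ (t₁ + σ) - N₂ (t₁ + σ)) * n₂ (a₁ + σ) (t₁ + σ))))| :=
          (intervalIntegral.integral_const_mul _ _).symm
      _ ≤ ∫ σ in (0:ℝ)..m, η * (|N₁ (t₁ + σ) - N₂ (t₁ + σ)| * n₂ (a₁ + σ) (t₁ + σ)) := hmono
      _ = η * ∫ σ in (0:ℝ)..m, |N₁ (t₁ + σ) - N₂ (t₁ + σ)| * n₂ (a₁ + σ) (t₁ + σ) :=
          intervalIntegral.integral_const_mul _ _
  rw [hwm]
  calc |Real.exp (-(D m)) * ((n₁ a₁ t₁ - n₂ a₁ t₁) + I)|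
      = Real.exp (-(D m)) * |(n₁ a₁ t₁ - n₂ a₁ t₁) + I| := by
        rw [abs_mul, abs_of_nonneg (Real.exp_pos _).le]
    _ ≤ Real.exp (-(D m)) * (|n₁ a₁ t₁ - n₂ a₁ t₁| + |I|) :=
        mul_le_mul_of_nonneg_left (abs_add_le _ _) (Real.exp_pos _).le
    _ = Real.exp (-(D m)) * |n₁ a₁ t₁ - n₂ a₁ t₁| + Real.exp (-(D m)) * |I| := by ring
    _ ≤ |n₁ a₁ t₁ - n₂ a₁ t₁| + η * ∫ σ in (0:ℝ)..m,
        |N₁ (t₁ + σ) - N₂ (t₁ + σ)| * n₂ (a₁ + σ) (t₁ + σ) := by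
        apply add_le_add _ hfinal
        calc Real.exp (-(D m)) * |n₁ a₁ t₁ - n₂ a₁ t₁| ≤ 1 * |n₁ a₁ t₁ - n₂ a₁ t₁| :=
              mul_le_mul_of_nonneg_right hexple (abs_nonneg _)
          _ = _ := one_mul _



/-- Uniqueness for the logistic Gurtin–McCamy equation: two continuous nonnegative
solutions (along characteristics, with integrable age sections, continuous total mass,
the birth boundary condition, and the same initial condition) coincide on
`[0,∞) × [0,∞)`. -/
theorem logistic_gurtin_mccamy_unique
    (b d : ℝ → ℝ) (bbar dlow η : ℝ)
    (hbcont : Continuous b) (hb0 : ∀ a, 0 ≤ b a) (hbbar : ∀ a, b a ≤ bbar)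
    (hbbarpos : 0 < bbar)
    (hdcont : Continuous d) (hdlow : ∀ a, 0 ≤ a → dlow ≤ d a) (hdlowpos : 0 < dlow)
    (hη : 0 < η)
    (n₁ n₂ : ℝ → ℝ → ℝ)
    (hcont₁ : ContinuousOn (Function.uncurry n₁) (Ici (0 : ℝ) ×ˢ Ici (0 : ℝ)))
    (hcont₂ : ContinuousOn (Function.uncurry n₂) (Ici (0 : ℝ) ×ˢ Ici (0 : ℝ)))
    (hnn₁ : ∀ a t, 0 ≤ a → 0 ≤ t → 0 ≤ n₁ a t)
    (hnn₂ : ∀ a t, 0 ≤ a → 0 ≤ t → 0 ≤ n₂ a t)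
    (hint₁ : ∀ t, 0 ≤ t → IntegrableOn (fun a => n₁ a t) (Ioi (0 : ℝ)))
    (hint₂ : ∀ t, 0 ≤ t → IntegrableOn (fun a => n₂ a t) (Ioi (0 : ℝ)))
    (hNcont₁ : ContinuousOn (fun t => ∫ a in Ioi (0 : ℝ), n₁ a t) (Ici (0 : ℝ)))
    (hNcont₂ : ContinuousOn (fun t => ∫ a in Ioi (0 : ℝ), n₂ a t) (Ici (0 : ℝ)))
    (hderiv₁ : ∀ a t, 0 ≤ a → 0 ≤ t →
      HasDerivAt (fun s => n₁ (a + s) (t + s))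
        (-(d a + η * ∫ α in Ioi (0 : ℝ), n₁ α t) * n₁ a t) 0)
    (hderiv₂ : ∀ a t, 0 ≤ a → 0 ≤ t →
      HasDerivAt (fun s => n₂ (a + s) (t + s))
        (-(d a + η * ∫ α in Ioi (0 : ℝ), n₂ α t) * n₂ a t) 0)
    (hbc₁ : ∀ t, 0 ≤ t → n₁ 0 t = ∫ a in Ioi (0 : ℝ), b a * n₁ a t)
    (hbc₂ : ∀ t, 0 ≤ t → n₂ 0 t = ∫ a in Ioi (0 : ℝ), b a * n₂ a t)
    (hinit : ∀ a, 0 ≤ a → n₁ a 0 = n₂ a 0) :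
    ∀ a t, 0 ≤ a → 0 ≤ t → n₁ a t = n₂ a t := by
  have hd0 : ∀ a, 0 ≤ a → 0 ≤ d a := fun a ha => le_trans hdlowpos.le (hdlow a ha)
  set N₁ : ℝ → ℝ := fun t => ∫ α in Ioi (0:ℝ), n₁ α t with hN₁def
  set N₂ : ℝ → ℝ := fun t => ∫ α in Ioi (0:ℝ), n₂ α t with hN₂def
  have hN₁0 : ∀ t, 0 ≤ t → 0 ≤ N₁ t := fun t ht =>
    setIntegral_nonneg measurableSet_Ioi (fun α hα => hnn₁ α t (le_of_lt hα) ht)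
  have hN₂0 : ∀ t, 0 ≤ t → 0 ≤ N₂ t := fun t ht =>
    setIntegral_nonneg measurableSet_Ioi (fun α hα => hnn₂ α t (le_of_lt hα) ht)
  have hbmeas : ∃ C, ∀ x, ‖b x‖ ≤ C :=
    ⟨bbar, fun x => by rw [Real.norm_eq_abs, abs_of_nonneg (hb0 x)]; exact hbbar x⟩
  have hib₁ : ∀ t, 0 ≤ t → IntegrableOn (fun a => b a * n₁ a t) (Ioi (0:ℝ)) := fun t ht =>
    (hint₁ t ht).bdd_mul hbcont.aestronglyMeasurable.restrict (ae_of_all _ hbmeas.choose_spec)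
  have hib₂ : ∀ t, 0 ≤ t → IntegrableOn (fun a => b a * n₂ a t) (Ioi (0:ℝ)) := fun t ht =>
    (hint₂ t ht).bdd_mul hbcont.aestronglyMeasurable.restrict (ae_of_all _ hbmeas.choose_spec)
  have hbdry₂ : ∀ τ, 0 ≤ τ → n₂ 0 τ ≤ bbar * N₂ τ := by
    intro τ hτ
    rw [hbc₂ τ hτ]
    have h1 : ∫ a in Ioi (0:ℝ), b a * n₂ a τ ≤ ∫ a in Ioi (0:ℝ), bbar * n₂ a τ := by
      apply setIntegral_mono_on (hib₂ τ hτ) ((hint₂ τ hτ).const_mul _) measurableSet_Ioi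
      intro a ha
      exact mul_le_mul_of_nonneg_right (hbbar a) (hnn₂ a τ (le_of_lt ha) hτ)
    rw [integral_const_mul] at h1
    exact h1
  set φ : ℝ → ℝ := fun t => ∫ a in Ioi (0:ℝ), |n₁ a t - n₂ a t| with hφdef
  have hwint : ∀ t, 0 ≤ t → IntegrableOn (fun a => |n₁ a t - n₂ a t|) (Ioi (0:ℝ)) :=
    fun t ht => ((hint₁ t ht).sub (hint₂ t ht)).abs
  have hφnn : ∀ t, 0 ≤ φ t := fun t =>
    setIntegral_nonneg measurableSet_Ioi (fun a _ => abs_nonneg _)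
  have hβφ : ∀ t, 0 ≤ t → |n₁ 0 t - n₂ 0 t| ≤ bbar * φ t := by
    intro t ht
    rw [hbc₁ t ht, hbc₂ t ht, ← integral_sub (hib₁ t ht) (hib₂ t ht)]
    calc |∫ a in Ioi (0:ℝ), (b a * n₁ a t - b a * n₂ a t)|
        ≤ ∫ a in Ioi (0:ℝ), |b a * n₁ a t - b a * n₂ a t| := by
          simpa [Real.norm_eq_abs] using
            norm_integral_le_integral_norm (μ := volume.restrict (Ioi (0:ℝ)))
              (fun a => b a * n₁ a t - b a * n₂ a t)
      _ ≤ ∫ a in Ioi (0:ℝ), bbar * |n₁ a t - n₂ a t| := by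
          apply setIntegral_mono_on (((hib₁ t ht).sub (hib₂ t ht)).abs)
            ((hwint t ht).const_mul _) measurableSet_Ioi
          intro a _
          show |b a * n₁ a t - b a * n₂ a t| ≤ bbar * |n₁ a t - n₂ a t|
          rw [← mul_sub, abs_mul, abs_of_nonneg (hb0 a)]
          exact mul_le_mul_of_nonneg_right (hbbar a) (abs_nonneg _)
      _ = bbar * φ t := integral_const_mul _ _
  have hΔφ : ∀ t, 0 ≤ t → |N₁ t - N₂ t| ≤ φ t := by
    intro t ht
    have heq : N₁ t - N₂ t = ∫ a in Ioi (0:ℝ), (n₁ a t - n₂ a t) := by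
      rw [integral_sub (hint₁ t ht) (hint₂ t ht)]
    rw [heq]
    simpa [Real.norm_eq_abs] using
      norm_integral_le_integral_norm (μ := volume.restrict (Ioi (0:ℝ)))
        (fun a => n₁ a t - n₂ a t)
  have hΔNcont : ContinuousOn (fun τ => |N₁ τ - N₂ τ|) (Ici (0:ℝ)) :=
    (hNcont₁.sub hNcont₂).abs
  have hΔint : ∀ c e : ℝ, 0 ≤ c → 0 ≤ e →
      IntervalIntegrable (fun τ => |N₁ τ - N₂ τ|) volume c e := by
    intro c e hc he
    apply ContinuousOn.intervalIntegrable
    apply hΔNcont.mono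
    intro x hx
    rcases le_total c e with h | h
    · rw [uIcc_of_le h] at hx; exact le_trans hc hx.1
    · rw [uIcc_of_ge h] at hx; exact le_trans he hx.1
  -- main Gronwall step
  have huz : ∀ T, 0 ≤ T → ∀ t, t ∈ Icc (0:ℝ) T →
      |n₁ 0 t - n₂ 0 t| + |N₁ t - N₂ t| = 0 := by
    intro T hT
    obtain ⟨x₀, hx₀mem, hx₀⟩ := isCompact_Icc.exists_isMaxOn (nonempty_Icc.2 hT)
      (hNcont₂.mono (fun x (hx : x ∈ Icc (0:ℝ) T) => hx.1))
    set C : ℝ := max (N₂ x₀) 0 with hCdef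
    have hC : ∀ τ ∈ Icc (0:ℝ) T, N₂ τ ≤ C := fun τ hτ => le_trans (hx₀ hτ) (le_max_left _ _)
    have hC0 : (0:ℝ) ≤ C := le_max_right _ _
    have hφbound : ∀ t ∈ Icc (0:ℝ) T, φ t ≤ (∫ τ in (0:ℝ)..t, |n₁ 0 τ - n₂ 0 τ|)
        + η * C * (bbar * T + 1) * ∫ τ in (0:ℝ)..t, |N₁ τ - N₂ τ| := by
      intro t htmem
      obtain ⟨ht0, htT⟩ := htmem
      set Jt : ℝ := ∫ τ in (0:ℝ)..t, |N₁ τ - N₂ τ| with hJdef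
      have hJ0 : 0 ≤ Jt := intervalIntegral.integral_nonneg ht0 (fun τ _ => abs_nonneg _)
      have hJmono : ∀ c, 0 ≤ c → c ≤ t → (∫ τ in c..t, |N₁ τ - N₂ τ|) ≤ Jt := by
        intro c hc hct
        have hadd : (∫ τ in (0:ℝ)..c, |N₁ τ - N₂ τ|) + ∫ τ in c..t, |N₁ τ - N₂ τ| = Jt :=
          intervalIntegral.integral_add_adjacent_intervals (hΔint 0 c le_rfl hc)
            (hΔint c t hc ht0)
        have h1 : 0 ≤ ∫ τ in (0:ℝ)..c, |N₁ τ - N₂ τ| :=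
          intervalIntegral.integral_nonneg hc (fun τ _ => abs_nonneg _)
        linarith
      -- pointwise estimate on (0, t]
      have hIocPoint : ∀ a ∈ Ioc (0:ℝ) t, |n₁ a t - n₂ a t|
          ≤ |n₁ 0 (t - a) - n₂ 0 (t - a)| + η * (bbar * C * Jt) := by
        intro a ha
        have hta : 0 ≤ t - a := by linarith [ha.2]
        have hchar := gm_char_est d η N₁ N₂ n₁ n₂ hdcont hd0 hη.le hNcont₁ hNcont₂ hN₁0
          hcont₂ hnn₂ hderiv₁ hderiv₂ 0 (t - a) a le_rfl hta (le_of_lt ha.1)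
        have e2 : t - a + a = t := by ring
        rw [zero_add, e2] at hchar
        have hmapIcc : MapsTo (fun σ : ℝ => t - a + σ) (Icc (0:ℝ) a) (Ici (0:ℝ)) := by
          intro σ hσ; simp only [mem_Ici]; have := hσ.1; linarith
        have hcΔ : ContinuousOn (fun σ => |N₁ (t - a + σ) - N₂ (t - a + σ)|) (Icc (0:ℝ) a) :=
          hΔNcont.comp (continuous_const.add continuous_id).continuousOn hmapIcc
        have hcn₂ : ContinuousOn (fun σ => n₂ (0 + σ) (t - a + σ)) (Icc (0:ℝ) a) :=
          (gm_cont_char n₂ hcont₂ 0 (t - a) le_rfl hta).mono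
            (fun σ hσ => by simp only [mem_Ici]; exact hσ.1)
        have hintle : (∫ σ in (0:ℝ)..a,
            |N₁ (t - a + σ) - N₂ (t - a + σ)| * n₂ (0 + σ) (t - a + σ)) ≤ bbar * C * Jt := by
          have hmono2 : (∫ σ in (0:ℝ)..a,
              |N₁ (t - a + σ) - N₂ (t - a + σ)| * n₂ (0 + σ) (t - a + σ))
              ≤ ∫ σ in (0:ℝ)..a, |N₁ (t - a + σ) - N₂ (t - a + σ)| * (bbar * C) := by
            apply intervalIntegral.integral_mono_on (le_of_lt ha.1)
              ((hcΔ.mul hcn₂).intervalIntegrable_of_Icc (le_of_lt ha.1))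
              ((hcΔ.mul continuousOn_const).intervalIntegrable_of_Icc (le_of_lt ha.1))
            intro σ hσ
            apply mul_le_mul_of_nonneg_left _ (abs_nonneg _)
            have hanti := gm_antitone d η N₂ n₂ hd0 hη.le hN₂0 hnn₂ hcont₂ hderiv₂
              0 (t - a) le_rfl hta
            have h1 : n₂ (0 + σ) (t - a + σ) ≤ n₂ (0 + 0) (t - a + 0) :=
              hanti self_mem_Ici (mem_Ici.2 hσ.1) hσ.1
            have h2 : n₂ (0 + 0) (t - a + 0) ≤ bbar * C := by
              norm_num
              calc n₂ 0 (t - a) ≤ bbar * N₂ (t - a) := hbdry₂ _ hta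
                _ ≤ bbar * C := mul_le_mul_of_nonneg_left
                    (hC _ ⟨hta, by linarith [ha.1.le]⟩) hbbarpos.le
            linarith
          have e3 : (∫ σ in (0:ℝ)..a, |N₁ (t - a + σ) - N₂ (t - a + σ)| * (bbar * C))
              = (∫ σ in (0:ℝ)..a, |N₁ (t - a + σ) - N₂ (t - a + σ)|) * (bbar * C) :=
            intervalIntegral.integral_mul_const _ _
          have e4 : (∫ σ in (0:ℝ)..a, |N₁ (t - a + σ) - N₂ (t - a + σ)|)
              = ∫ τ in (t - a)..t, |N₁ τ - N₂ τ| := by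
            have h := intervalIntegral.integral_comp_add_left (a := (0:ℝ)) (b := a)
              (fun τ => |N₁ τ - N₂ τ|) (t - a)
            rw [add_zero, e2] at h
            exact h
          have h5 : (∫ τ in (t - a)..t, |N₁ τ - N₂ τ|) ≤ Jt := hJmono (t - a) hta (by linarith [ha.1.le])
          calc (∫ σ in (0:ℝ)..a, |N₁ (t - a + σ) - N₂ (t - a + σ)| * n₂ (0 + σ) (t - a + σ))
              ≤ (∫ σ in (0:ℝ)..a, |N₁ (t - a + σ) - N₂ (t - a + σ)|) * (bbar * C) := by
                rw [← e3]; exact hmono2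
            _ ≤ Jt * (bbar * C) := by
                rw [e4]
                apply mul_le_mul_of_nonneg_right h5
                exact mul_nonneg hbbarpos.le hC0
            _ = bbar * C * Jt := by ring
        have h6 : η * (∫ σ in (0:ℝ)..a,
            |N₁ (t - a + σ) - N₂ (t - a + σ)| * n₂ (0 + σ) (t - a + σ))
            ≤ η * (bbar * C * Jt) := mul_le_mul_of_nonneg_left hintle hη.le
        linarith
      -- pointwise estimate on (t, ∞)
      have hIoiPoint : ∀ a ∈ Ioi t, |n₁ a t - n₂ a t| ≤ η * (Jt * n₂ (a - t) 0) := by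
        intro a ha
        have hat : 0 ≤ a - t := by simp only [mem_Ioi] at ha; linarith
        have hchar := gm_char_est d η N₁ N₂ n₁ n₂ hdcont hd0 hη.le hNcont₁ hNcont₂ hN₁0
          hcont₂ hnn₂ hderiv₁ hderiv₂ (a - t) 0 t hat le_rfl ht0
        have e1 : a - t + t = a := by ring
        rw [e1] at hchar
        simp only [zero_add] at hchar
        have hz : |n₁ (a - t) 0 - n₂ (a - t) 0| = 0 := by
          rw [hinit (a - t) hat]; simp
        rw [hz, zero_add] at hchar
        have hcΔ : ContinuousOn (fun σ : ℝ => |N₁ σ - N₂ σ|) (Icc (0:ℝ) t) :=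
          hΔNcont.mono (fun x hx => hx.1)
        have hcn₂ : ContinuousOn (fun σ => n₂ (a - t + σ) σ) (Icc (0:ℝ) t) := by
          have := (gm_cont_char n₂ hcont₂ (a - t) 0 hat le_rfl).mono
            (fun σ (hσ : σ ∈ Icc (0:ℝ) t) => by simp only [mem_Ici]; exact hσ.1)
          simpa using this
        have hintle : (∫ σ in (0:ℝ)..t, |N₁ σ - N₂ σ| * n₂ (a - t + σ) σ)
            ≤ Jt * n₂ (a - t) 0 := by
          have hmono2 : (∫ σ in (0:ℝ)..t, |N₁ σ - N₂ σ| * n₂ (a - t + σ) σ)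
              ≤ ∫ σ in (0:ℝ)..t, |N₁ σ - N₂ σ| * n₂ (a - t) 0 := by
            apply intervalIntegral.integral_mono_on ht0
              ((hcΔ.mul hcn₂).intervalIntegrable_of_Icc ht0)
              ((hcΔ.mul continuousOn_const).intervalIntegrable_of_Icc ht0)
            intro σ hσ
            apply mul_le_mul_of_nonneg_left _ (abs_nonneg _)
            have hanti := gm_antitone d η N₂ n₂ hd0 hη.le hN₂0 hnn₂ hcont₂ hderiv₂
              (a - t) 0 hat le_rfl
            have h1 : n₂ (a - t + σ) (0 + σ) ≤ n₂ (a - t + 0) (0 + 0) :=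
              hanti self_mem_Ici (mem_Ici.2 hσ.1) hσ.1
            simpa using h1
          rw [intervalIntegral.integral_mul_const] at hmono2
          exact hmono2
        calc |n₁ a t - n₂ a t|
            ≤ η * ∫ σ in (0:ℝ)..t, |N₁ σ - N₂ σ| * n₂ (a - t + σ) σ := hchar
          _ ≤ η * (Jt * n₂ (a - t) 0) := mul_le_mul_of_nonneg_left hintle hη.le
      -- shift integral identities
      have emb : MeasurableEmbedding (fun x : ℝ => x + t) :=
        (MeasurableEquiv.addRight t).measurableEmbedding
      have hmp := measurePreserving_add_right (volume : Measure ℝ) t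
      have hpre : (fun x : ℝ => x + t) ⁻¹' (Ioi t) = Ioi 0 := by
        ext x; simp only [mem_preimage, mem_Ioi]; constructor <;> intro h <;> linarith
      have hshiftEq : (∫ a in Ioi t, n₂ (a - t) 0) = N₂ 0 := by
        have h := hmp.setIntegral_preimage_emb emb (fun a => n₂ (a - t) 0) (Ioi t)
        rw [hpre] at h
        have e : ∀ x : ℝ, x + t - t = x := fun x => by ring
        simp only [e] at h
        rw [← h]
      have hshiftInt : IntegrableOn (fun a => n₂ (a - t) 0) (Ioi t) := by
        have hre := hmp.restrict_preimage_emb emb (Ioi t)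
        apply (hre.integrable_comp_emb emb).1
        rw [hpre]
        have e : ((fun a => n₂ (a - t) 0) ∘ fun x : ℝ => x + t) = fun x => n₂ x 0 := by
          funext x; simp [Function.comp]
        rw [e]
        exact hint₂ 0 le_rfl
      -- integrate the pointwise bounds
      have hLIoc : IntegrableOn (fun a => |n₁ a t - n₂ a t|) (Ioc 0 t) :=
        (hwint t ht0).mono_set Ioc_subset_Ioi_self
      have hLIoi : IntegrableOn (fun a => |n₁ a t - n₂ a t|) (Ioi t) :=
        (hwint t ht0).mono_set (Ioi_subset_Ioi ht0)
      have hsplit : φ t = (∫ a in Ioc (0:ℝ) t, |n₁ a t - n₂ a t|)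
          + ∫ a in Ioi t, |n₁ a t - n₂ a t| := by
        simp only [hφdef]
        rw [show Ioi (0:ℝ) = Ioc 0 t ∪ Ioi t from (Ioc_union_Ioi_eq_Ioi ht0).symm,
          setIntegral_union (Ioc_disjoint_Ioi le_rfl) measurableSet_Ioi hLIoc hLIoi]
      have hRcont : ContinuousOn (fun a => |n₁ 0 (t - a) - n₂ 0 (t - a)|) (Icc (0:ℝ) t) := by
        have hmap : MapsTo (fun a : ℝ => ((0:ℝ), t - a)) (Icc (0:ℝ) t) (Ici (0:ℝ) ×ˢ Ici (0:ℝ)) := by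
          intro x hx
          simp only [mem_prod, mem_Ici]
          exact ⟨le_rfl, by linarith [hx.2]⟩
        have h1 : ContinuousOn (fun a => n₁ 0 (t - a)) (Icc (0:ℝ) t) :=
          hcont₁.comp (continuous_const.prodMk (continuous_const.sub continuous_id)).continuousOn hmap
        have h2 : ContinuousOn (fun a => n₂ 0 (t - a)) (Icc (0:ℝ) t) :=
          hcont₂.comp (continuous_const.prodMk (continuous_const.sub continuous_id)).continuousOn hmap
        exact (h1.sub h2).abs
      have hRIoc : IntegrableOn (fun a => |n₁ 0 (t - a) - n₂ 0 (t - a)| + η * (bbar * C * Jt))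
          (Ioc 0 t) :=
        ((hRcont.add continuousOn_const).integrableOn_Icc).mono_set Ioc_subset_Icc_self
      have hIoc : (∫ a in Ioc (0:ℝ) t, |n₁ a t - n₂ a t|)
          ≤ (∫ τ in (0:ℝ)..t, |n₁ 0 τ - n₂ 0 τ|) + T * (η * (bbar * C * Jt)) := by
        have h1 : (∫ a in Ioc (0:ℝ) t, |n₁ a t - n₂ a t|)
            ≤ ∫ a in Ioc (0:ℝ) t, (|n₁ 0 (t - a) - n₂ 0 (t - a)| + η * (bbar * C * Jt)) :=
          setIntegral_mono_on hLIoc hRIoc measurableSet_Ioc hIocPoint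
        have h2 : (∫ a in Ioc (0:ℝ) t, (|n₁ 0 (t - a) - n₂ 0 (t - a)| + η * (bbar * C * Jt)))
            = (∫ a in Ioc (0:ℝ) t, |n₁ 0 (t - a) - n₂ 0 (t - a)|)
              + (volume (Ioc (0:ℝ) t)).toReal * (η * (bbar * C * Jt)) := by
          rw [integral_add (hRcont.integrableOn_Icc.mono_set Ioc_subset_Icc_self)
            (integrableOn_const measure_Ioc_lt_top.ne)]
          simp [setIntegral_const, smul_eq_mul]
          left; rw [ENNReal.toReal_ofReal ht0, max_eq_left ht0]
        have h3 : (∫ a in Ioc (0:ℝ) t, |n₁ 0 (t - a) - n₂ 0 (t - a)|)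
            = ∫ τ in (0:ℝ)..t, |n₁ 0 τ - n₂ 0 τ| := by
          rw [← intervalIntegral.integral_of_le ht0]
          have h := intervalIntegral.integral_comp_sub_left (a := (0:ℝ)) (b := t)
            (fun τ => |n₁ 0 τ - n₂ 0 τ|) t
          rw [sub_self, sub_zero] at h
          rw [h]
        have h4 : (volume (Ioc (0:ℝ) t)).toReal = t := by
          rw [Real.volume_Ioc]
          simp [ht0]
        have h5 : 0 ≤ η * (bbar * C * Jt) :=
          mul_nonneg hη.le (mul_nonneg (mul_nonneg hbbarpos.le hC0) hJ0)
        have h6 : t * (η * (bbar * C * Jt)) ≤ T * (η * (bbar * C * Jt)) :=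
          mul_le_mul_of_nonneg_right htT h5
        rw [h2, h3, h4] at h1
        linarith
      have hIoi : (∫ a in Ioi t, |n₁ a t - n₂ a t|) ≤ η * C * Jt := by
        have h1 : (∫ a in Ioi t, |n₁ a t - n₂ a t|) ≤ ∫ a in Ioi t, η * (Jt * n₂ (a - t) 0) :=
          setIntegral_mono_on hLIoi (((hshiftInt.const_mul Jt).const_mul η))
            measurableSet_Ioi hIoiPoint
        have h2 : (∫ a in Ioi t, η * (Jt * n₂ (a - t) 0)) = η * (Jt * N₂ 0) := by
          rw [integral_const_mul, integral_const_mul, hshiftEq]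
        have h3 : N₂ 0 ≤ C := hC 0 ⟨le_rfl, hT⟩
        have h4 : η * (Jt * N₂ 0) ≤ η * (Jt * C) :=
          mul_le_mul_of_nonneg_left (mul_le_mul_of_nonneg_left h3 hJ0) hη.le
        rw [h2] at h1
        calc (∫ a in Ioi t, |n₁ a t - n₂ a t|) ≤ η * (Jt * C) := le_trans h1 h4
          _ = η * C * Jt := by ring
      rw [hsplit]
      have halg : T * (η * (bbar * C * Jt)) + η * C * Jt = η * C * (bbar * T + 1) * Jt := by ring
      linarith
    -- Gronwall
    have hmaxc : Continuous fun τ : ℝ => max τ 0 := continuous_id.max continuous_const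
    have hmaxmem : ∀ τ : ℝ, ((0:ℝ), max τ 0) ∈ Ici (0:ℝ) ×ˢ Ici (0:ℝ) :=
      fun τ => ⟨mem_Ici.2 le_rfl, mem_Ici.2 (le_max_right _ _)⟩
    have h1c : Continuous fun τ : ℝ => n₁ 0 (max τ 0) :=
      hcont₁.comp_continuous (continuous_const.prodMk hmaxc) hmaxmem
    have h2c : Continuous fun τ : ℝ => n₂ 0 (max τ 0) :=
      hcont₂.comp_continuous (continuous_const.prodMk hmaxc) hmaxmem
    have h3c : Continuous fun τ : ℝ => N₁ (max τ 0) :=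
      hNcont₁.comp_continuous hmaxc (fun τ => mem_Ici.2 (le_max_right _ _))
    have h4c : Continuous fun τ : ℝ => N₂ (max τ 0) :=
      hNcont₂.comp_continuous hmaxc (fun τ => mem_Ici.2 (le_max_right _ _))
    have hβm : Continuous fun τ : ℝ => |n₁ 0 (max τ 0) - n₂ 0 (max τ 0)| := (h1c.sub h2c).abs
    have hΔm : Continuous fun τ : ℝ => |N₁ (max τ 0) - N₂ (max τ 0)| := (h3c.sub h4c).abs
    set u : ℝ → ℝ := fun τ => |n₁ 0 (max τ 0) - n₂ 0 (max τ 0)|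
      + |N₁ (max τ 0) - N₂ (max τ 0)| with hudef
    have hucont : Continuous u := hβm.add hΔm
    have hueq : ∀ τ, 0 ≤ τ → u τ = |n₁ 0 τ - n₂ 0 τ| + |N₁ τ - N₂ τ| := by
      intro τ hτ; simp only [hudef, max_eq_left hτ]
    have hu0 : ∀ τ, 0 ≤ u τ := fun τ => add_nonneg (abs_nonneg _) (abs_nonneg _)
    set K : ℝ := (bbar + 1) * (1 + η * C * (bbar * T + 1)) with hKdef
    have hcoef0 : 0 ≤ η * C * (bbar * T + 1) := by
      apply mul_nonneg (mul_nonneg hη.le hC0)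
      nlinarith [hbbarpos.le]
    have hK0 : 0 ≤ K := by
      apply mul_nonneg
      · linarith [hbbarpos.le]
      · linarith
    set v : ℝ → ℝ := fun τ => ∫ x in (0:ℝ)..τ, u x with hvdef
    have hvderiv : ∀ τ : ℝ, HasDerivAt v (u τ) τ := fun τ =>
      intervalIntegral.integral_hasDerivAt_right (hucont.intervalIntegrable _ _)
        (hucont.stronglyMeasurableAtFilter _ _) hucont.continuousAt
    have hvcont : Continuous v := continuous_iff_continuousAt.2 fun τ => (hvderiv τ).continuousAt
    have hv0 : v 0 = 0 := intervalIntegral.integral_same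
    have hvnn : ∀ τ, 0 ≤ τ → 0 ≤ v τ := fun τ hτ =>
      intervalIntegral.integral_nonneg hτ (fun x _ => hu0 x)
    have hbound : ∀ τ ∈ Icc (0:ℝ) T, u τ ≤ K * v τ := by
      intro τ hτ
      have hφb := hφbound τ hτ
      have hβle : (∫ x in (0:ℝ)..τ, |n₁ 0 x - n₂ 0 x|) ≤ v τ := by
        have he : EqOn (fun x => |n₁ 0 x - n₂ 0 x|)
            (fun x => |n₁ 0 (max x 0) - n₂ 0 (max x 0)|) (uIcc 0 τ) := by
          intro x hx
          rw [uIcc_of_le hτ.1] at hx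
          simp only [max_eq_left hx.1]
        rw [intervalIntegral.integral_congr he]
        apply intervalIntegral.integral_mono_on hτ.1 (hβm.intervalIntegrable _ _)
          (hucont.intervalIntegrable _ _)
        intro x _
        simp only [hudef]
        have := abs_nonneg (N₁ (max x 0) - N₂ (max x 0))
        linarith
      have hΔle : (∫ x in (0:ℝ)..τ, |N₁ x - N₂ x|) ≤ v τ := by
        have he : EqOn (fun x => |N₁ x - N₂ x|)
            (fun x => |N₁ (max x 0) - N₂ (max x 0)|) (uIcc 0 τ) := by
          intro x hx
          rw [uIcc_of_le hτ.1] at hx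
          simp only [max_eq_left hx.1]
        rw [intervalIntegral.integral_congr he]
        apply intervalIntegral.integral_mono_on hτ.1 (hΔm.intervalIntegrable _ _)
          (hucont.intervalIntegrable _ _)
        intro x _
        simp only [hudef]
        have := abs_nonneg (n₁ 0 (max x 0) - n₂ 0 (max x 0))
        linarith
      have hφle : φ τ ≤ (1 + η * C * (bbar * T + 1)) * v τ := by
        have h7 : η * C * (bbar * T + 1) * (∫ x in (0:ℝ)..τ, |N₁ x - N₂ x|)
            ≤ η * C * (bbar * T + 1) * v τ := mul_le_mul_of_nonneg_left hΔle hcoef0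
        nlinarith [hφb]
      have hule : u τ ≤ (bbar + 1) * φ τ := by
        rw [hueq τ hτ.1]
        have hb1 := hβφ τ hτ.1
        have hb2 := hΔφ τ hτ.1
        have := hφnn τ
        nlinarith
      calc u τ ≤ (bbar + 1) * φ τ := hule
        _ ≤ (bbar + 1) * ((1 + η * C * (bbar * T + 1)) * v τ) :=
            mul_le_mul_of_nonneg_left hφle (by linarith [hbbarpos.le])
        _ = K * v τ := by rw [hKdef]; ring
    have hgron := norm_le_gronwallBound_of_norm_deriv_right_le (f := v) (f' := u)
      (δ := 0) (K := K) (ε := 0) (a := 0) (b := T) hvcont.continuousOn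
      (fun x _ => (hvderiv x).hasDerivWithinAt)
      (by rw [hv0]; simp)
      (by
        intro x hx
        rw [Real.norm_eq_abs, Real.norm_eq_abs, abs_of_nonneg (hu0 x), add_zero]
        calc u x ≤ K * v x := hbound x ⟨hx.1, hx.2.le⟩
          _ ≤ K * |v x| := mul_le_mul_of_nonneg_left (le_abs_self _) hK0)
    intro t htmem
    have hvt := hgron t htmem
    rw [gronwallBound_ε0_δ0, Real.norm_eq_abs] at hvt
    have hvt0 : v t = 0 :=
      le_antisymm (le_trans (le_abs_self _) hvt) (hvnn t htmem.1)
    have hut := hbound t htmem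
    rw [hvt0, mul_zero] at hut
    have hu00 : u t = 0 := le_antisymm hut (hu0 t)
    rw [hueq t htmem.1] at hu00
    exact hu00
  -- conclude: boundary and total-mass differences vanish
  have hβ0 : ∀ τ, 0 ≤ τ → n₁ 0 τ = n₂ 0 τ := by
    intro τ hτ
    have h := huz τ hτ τ ⟨hτ, le_rfl⟩
    have h1 : |n₁ 0 τ - n₂ 0 τ| = 0 := by
      have := abs_nonneg (n₁ 0 τ - n₂ 0 τ)
      have := abs_nonneg (N₁ τ - N₂ τ)
      linarith
    rw [abs_eq_zero, sub_eq_zero] at h1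
    exact h1
  have hΔ0 : ∀ τ, 0 ≤ τ → N₁ τ = N₂ τ := by
    intro τ hτ
    have h := huz τ hτ τ ⟨hτ, le_rfl⟩
    have h1 : |N₁ τ - N₂ τ| = 0 := by
      have := abs_nonneg (n₁ 0 τ - n₂ 0 τ)
      have := abs_nonneg (N₁ τ - N₂ τ)
      linarith
    rw [abs_eq_zero, sub_eq_zero] at h1
    exact h1
  -- final pointwise conclusion
  intro a t ha ht
  rcases le_total t a with hta | hat
  · have hchar := gm_char_est d η N₁ N₂ n₁ n₂ hdcont hd0 hη.le hNcont₁ hNcont₂ hN₁0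
      hcont₂ hnn₂ hderiv₁ hderiv₂ (a - t) 0 t (by linarith) le_rfl ht
    have e1 : a - t + t = a := by ring
    rw [e1] at hchar
    simp only [zero_add] at hchar
    have hz1 : |n₁ (a - t) 0 - n₂ (a - t) 0| = 0 := by
      rw [hinit (a - t) (by linarith)]; simp
    have hz2 : (∫ σ in (0:ℝ)..t, |N₁ σ - N₂ σ| * n₂ (a - t + σ) σ) = 0 := by
      have he : EqOn (fun σ => |N₁ σ - N₂ σ| * n₂ (a - t + σ) σ)
          (fun _ => (0:ℝ)) (uIcc 0 t) := by
        intro σ hσ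
        rw [uIcc_of_le ht] at hσ
        simp only [hΔ0 σ hσ.1, sub_self, abs_zero, zero_mul]
      rw [intervalIntegral.integral_congr he]
      simp
    rw [hz1, hz2, mul_zero, add_zero] at hchar
    have := abs_nonneg (n₁ a t - n₂ a t)
    have heq : |n₁ a t - n₂ a t| = 0 := le_antisymm hchar this
    rw [abs_eq_zero, sub_eq_zero] at heq
    exact heq
  · have hchar := gm_char_est d η N₁ N₂ n₁ n₂ hdcont hd0 hη.le hNcont₁ hNcont₂ hN₁0
      hcont₂ hnn₂ hderiv₁ hderiv₂ 0 (t - a) a le_rfl (by linarith) ha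
    have e2 : t - a + a = t := by ring
    rw [zero_add, e2] at hchar
    have hz1 : |n₁ 0 (t - a) - n₂ 0 (t - a)| = 0 := by
      rw [hβ0 (t - a) (by linarith)]; simp
    have hz2 : (∫ σ in (0:ℝ)..a, |N₁ (t - a + σ) - N₂ (t - a + σ)| * n₂ (0 + σ) (t - a + σ)) = 0 := by
      have he : EqOn (fun σ => |N₁ (t - a + σ) - N₂ (t - a + σ)| * n₂ (0 + σ) (t - a + σ))
          (fun _ => (0:ℝ)) (uIcc 0 a) := by
        intro σ hσ
        rw [uIcc_of_le ha] at hσ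
        simp only [hΔ0 (t - a + σ) (by linarith [hσ.1]), sub_self, abs_zero, zero_mul]
      rw [intervalIntegral.integral_congr he]
      simp
    rw [hz1, hz2, mul_zero, add_zero] at hchar
    have := abs_nonneg (n₁ a t - n₂ a t)
    have heq : |n₁ a t - n₂ a t| = 0 := le_antisymm hchar this
    rw [abs_eq_zero, sub_eq_zero] at heq
    exact heq
end
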